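/- arXiv:1908.07925 — 3 statements merged into one kernel-verified Lean document; each statement's English description precedes it below -/
import Mathlib

section
/- Let [A] be an interval matrix with midpoint Ac = (1/2)(A̲+Ā) and radius Δ = (1/2)(Ā−A̲). Suppose Ac is an M-matrix and Δ is irreducible. Then [A] is strongly column sufficient if and only if A̲ is an M0-matrix. -/
open Matrix

open Finset Filter

/-- Spectral radius of a real square matrix (via its complex spectrum). -/
noncomputable def specRad {n : ℕ} (A : Matrix (Fin n) (Fin n) ℝ) : ℝ :=
  (spectralRadius ℂ (A.map (algebraMap ℝ ℂ))).toReal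

/-- `A` is an M-matrix: `A = s•I - N` with `N ≥ 0` and `s > ρ(N)`. -/
def IsMMatrix {n : ℕ} (A : Matrix (Fin n) (Fin n) ℝ) : Prop :=
  ∃ (s : ℝ) (N : Matrix (Fin n) (Fin n) ℝ),
    (∀ i j, 0 ≤ N i j) ∧ A = s • (1 : Matrix (Fin n) (Fin n) ℝ) - N ∧ specRad N < s

/-- `A` is an M0-matrix: `A = s•I - N` with `N ≥ 0` and `s ≥ ρ(N)`. -/
def IsM0Matrix {n : ℕ} (A : Matrix (Fin n) (Fin n) ℝ) : Prop :=
  ∃ (s : ℝ) (N : Matrix (Fin n) (Fin n) ℝ),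
    (∀ i j, 0 ≤ N i j) ∧ A = s • (1 : Matrix (Fin n) (Fin n) ℝ) - N ∧ specRad N ≤ s

/-- Comparison matrix. -/
def compMatrix {n : ℕ} (A : Matrix (Fin n) (Fin n) ℝ) : Matrix (Fin n) (Fin n) ℝ :=
  fun i j => if i = j then |A i i| else -|A i j|

def IsHMatrix {n : ℕ} (A : Matrix (Fin n) (Fin n) ℝ) : Prop :=
  IsMMatrix (compMatrix A)

def IsSMatrix {n : ℕ} (A : Matrix (Fin n) (Fin n) ℝ) : Prop :=
  ∃ x : Fin n → ℝ, (∀ i, 0 < x i) ∧ (∀ i, 0 < A.mulVec x i)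

def Copositive {n : ℕ} (A : Matrix (Fin n) (Fin n) ℝ) : Prop :=
  ∀ x : Fin n → ℝ, (∀ i, 0 ≤ x i) → 0 ≤ x ⬝ᵥ A.mulVec x

def StrictlyCopositive {n : ℕ} (A : Matrix (Fin n) (Fin n) ℝ) : Prop :=
  ∀ x : Fin n → ℝ, (∀ i, 0 ≤ x i) → x ≠ 0 → 0 < x ⬝ᵥ A.mulVec x

def Semimonotone {n : ℕ} (A : Matrix (Fin n) (Fin n) ℝ) : Prop :=
  ∀ I : Finset (Fin n), I.Nonempty →
    ¬ ∃ x : ↥I → ℝ,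
      (∀ i, (A.submatrix ((↑) : ↥I → Fin n) ((↑) : ↥I → Fin n)).mulVec x i < 0) ∧
      (∀ i, 0 ≤ x i)

def PrincipallyNondegenerate {n : ℕ} (A : Matrix (Fin n) (Fin n) ℝ) : Prop :=
  ∀ I : Finset (Fin n), I.Nonempty →
    (A.submatrix ((↑) : ↥I → Fin n) ((↑) : ↥I → Fin n)).det ≠ 0

/-- A nonnegative matrix is irreducible if `(I + A)^(n-1) > 0` entrywise. -/
def IrreducibleMat {n : ℕ} (A : Matrix (Fin n) (Fin n) ℝ) : Prop :=
  ∀ i j, 0 < ((1 + A) ^ (n - 1)) i j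

/-- The block matrix `[[A_II, -A_IJ], [-A_JI, A_JJ]]`. -/
def csBlock {n : ℕ} (A : Matrix (Fin n) (Fin n) ℝ) (I J : Finset (Fin n)) :
    Matrix (↥I ⊕ ↥J) (↥I ⊕ ↥J) ℝ :=
  Matrix.fromBlocks
    (A.submatrix ((↑) : ↥I → Fin n) ((↑) : ↥I → Fin n))
    (-(A.submatrix ((↑) : ↥I → Fin n) ((↑) : ↥J → Fin n)))
    (-(A.submatrix ((↑) : ↥J → Fin n) ((↑) : ↥I → Fin n)))
    (A.submatrix ((↑) : ↥J → Fin n) ((↑) : ↥J → Fin n))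

def ColumnSufficient {n : ℕ} (A : Matrix (Fin n) (Fin n) ℝ) : Prop :=
  ∀ I J : Finset (Fin n), Disjoint I J → (I ∪ J).Nonempty →
    ¬ ∃ x : (↥I ⊕ ↥J) → ℝ,
      (∀ k, (csBlock A I J).mulVec x k ≤ 0) ∧
      (csBlock A I J).mulVec x ≠ 0 ∧
      (∀ k, 0 < x k)

def IsR0Matrix {n : ℕ} (A : Matrix (Fin n) (Fin n) ℝ) : Prop :=
  ∀ I : Finset (Fin n), I.Nonempty →
    ¬ ∃ x : ↥I → ℝ,
      (∀ i, (A.submatrix ((↑) : ↥I → Fin n) ((↑) : ↥I → Fin n)).mulVec x i = 0) ∧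
      (∀ j : ↥(Iᶜ : Finset (Fin n)),
        0 ≤ (A.submatrix ((↑) : ↥(Iᶜ : Finset (Fin n)) → Fin n) ((↑) : ↥I → Fin n)).mulVec x j) ∧
      (∀ i, 0 < x i)

def IsRMatrix {n : ℕ} (A : Matrix (Fin n) (Fin n) ℝ) : Prop :=
  ∀ I : Finset (Fin n), I.Nonempty →
    ¬ ∃ (x : ↥I → ℝ) (t : ℝ),
      (∀ i, (A.submatrix ((↑) : ↥I → Fin n) ((↑) : ↥I → Fin n)).mulVec x i + t = 0) ∧
      (∀ j : ↥(Iᶜ : Finset (Fin n)),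
        0 ≤ (A.submatrix ((↑) : ↥(Iᶜ : Finset (Fin n)) → Fin n) ((↑) : ↥I → Fin n)).mulVec x j + t) ∧
      (∀ i, 0 < x i) ∧ 0 ≤ t

def PosDefMat {n : ℕ} (A : Matrix (Fin n) (Fin n) ℝ) : Prop :=
  ∀ x : Fin n → ℝ, x ≠ 0 → 0 < x ⬝ᵥ A.mulVec x

def PosSemidefMat {n : ℕ} (A : Matrix (Fin n) (Fin n) ℝ) : Prop :=
  ∀ x : Fin n → ℝ, 0 ≤ x ⬝ᵥ A.mulVec x

/-- Membership of `A` in the interval matrix `[Al, Au]`. -/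
def memInterval {n : ℕ} (Al Au A : Matrix (Fin n) (Fin n) ℝ) : Prop :=
  ∀ i j, Al i j ≤ A i j ∧ A i j ≤ Au i j

/-- The mixed block matrix `[[Al_II, -Au_IJ], [-Au_JI, Al_JJ]]`. -/
def csMixedBlock {n : ℕ} (Al Au : Matrix (Fin n) (Fin n) ℝ) (I J : Finset (Fin n)) :
    Matrix (↥I ⊕ ↥J) (↥I ⊕ ↥J) ℝ :=
  Matrix.fromBlocks
    (Al.submatrix ((↑) : ↥I → Fin n) ((↑) : ↥I → Fin n))
    (-(Au.submatrix ((↑) : ↥I → Fin n) ((↑) : ↥J → Fin n)))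
    (-(Au.submatrix ((↑) : ↥J → Fin n) ((↑) : ↥I → Fin n)))
    (Al.submatrix ((↑) : ↥J → Fin n) ((↑) : ↥J → Fin n))


variable {n : ℕ}

lemma specRad_nonneg (A : Matrix (Fin n) (Fin n) ℝ) : 0 ≤ specRad A :=
  ENNReal.toReal_nonneg

variable {n : ℕ}

lemma mulVec_nonneg' {M : Matrix (Fin n) (Fin n) ℝ} {v : Fin n → ℝ}
    (hM : ∀ i j, 0 ≤ M i j) (hv : ∀ i, 0 ≤ v i) : ∀ i, 0 ≤ M.mulVec v i := by
  intro i
  rw [Matrix.mulVec, dotProduct]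
  exact Finset.sum_nonneg fun j _ => mul_nonneg (hM i j) (hv j)

lemma mulVec_mono' {M : Matrix (Fin n) (Fin n) ℝ} {v w : Fin n → ℝ}
    (hM : ∀ i j, 0 ≤ M i j) (hvw : ∀ i, v i ≤ w i) : ∀ i, M.mulVec v i ≤ M.mulVec w i := by
  intro i
  rw [Matrix.mulVec, Matrix.mulVec, dotProduct, dotProduct]
  exact Finset.sum_le_sum fun j _ => mul_le_mul_of_nonneg_left (hvw j) (hM i j)

lemma mulVec_pos' {P : Matrix (Fin n) (Fin n) ℝ} {v : Fin n → ℝ}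
    (hP : ∀ i j, 0 < P i j) (hv : ∀ i, 0 ≤ v i) (hv0 : v ≠ 0) : ∀ i, 0 < P.mulVec v i := by
  intro i
  obtain ⟨j0, hj0⟩ : ∃ j, 0 < v j := by
    by_contra h
    push_neg at h
    exact hv0 (funext fun j => le_antisymm (h j) (hv j))
  have h1 : P i j0 * v j0 ≤ ∑ j, P i j * v j :=
    Finset.single_le_sum (f := fun j => P i j * v j)
      (fun j _ => mul_nonneg (hP i j).le (hv j)) (Finset.mem_univ j0)
  rw [Matrix.mulVec, dotProduct]
  exact lt_of_lt_of_le (mul_pos (hP i j0) hj0) h1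

/-- entrywise `0 ≤ Q ≤ P` implies `0 ≤ Q^k ≤ P^k` entrywise -/
lemma pow_entry_mono {P Q : Matrix (Fin n) (Fin n) ℝ}
    (hQ : ∀ i j, 0 ≤ Q i j) (hQP : ∀ i j, Q i j ≤ P i j) (k : ℕ) :
    (∀ i j, 0 ≤ (Q ^ k) i j) ∧ (∀ i j, (Q ^ k) i j ≤ (P ^ k) i j) := by
  induction k with
  | zero =>
    constructor <;> intro i j <;> simp [Matrix.one_apply] <;> positivity
  | succ k ih =>
    obtain ⟨ih1, ih2⟩ := ih
    constructor
    · intro i j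
      rw [pow_succ, Matrix.mul_apply]
      exact Finset.sum_nonneg fun l _ => mul_nonneg (ih1 i l) (hQ l j)
    · intro i j
      rw [pow_succ, pow_succ, Matrix.mul_apply, Matrix.mul_apply]
      refine Finset.sum_le_sum fun l _ => ?_
      exact mul_le_mul (ih2 i l) (hQP l j) (hQ l j) ((ih1 i l).trans (ih2 i l))

/-- Transfer of irreducibility along entrywise domination off the diagonal. -/
lemma irr_transfer (hn : 0 < n) {Δ N : Matrix (Fin n) (Fin n) ℝ}
    (hΔ : ∀ i j, 0 ≤ Δ i j) (hdiag : ∀ i, 0 ≤ N i i)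
    (hoff : ∀ i j, i ≠ j → Δ i j ≤ N i j)
    (hirr : ∀ i j, 0 < ((1 + Δ) ^ (n - 1)) i j) :
    ∀ i j, 0 < ((1 + N) ^ (n - 1)) i j := by
  have hne : (Finset.univ : Finset (Fin n)).Nonempty := ⟨⟨0, hn⟩, Finset.mem_univ _⟩
  set S : ℝ := Finset.univ.sup' hne (fun i => Δ i i) with hS
  have hS0 : 0 ≤ S := le_trans (hΔ ⟨0, hn⟩ ⟨0, hn⟩) (Finset.le_sup' (fun i => Δ i i) (Finset.mem_univ _))
  set c : ℝ := (1 + S)⁻¹ with hc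
  have hc0 : 0 < c := inv_pos.mpr (by linarith)
  have hc1 : c ≤ 1 := by
    rw [hc]
    rw [inv_le_one_iff₀]
    right; linarith
  have key : ∀ i j, (c • (1 + Δ)) i j ≤ (1 + N) i j := by
    intro i j
    by_cases h : i = j
    · subst h
      have h1 : Δ i i ≤ S := Finset.le_sup' (fun i => Δ i i) (Finset.mem_univ i)
      have : c * (1 + Δ i i) ≤ 1 := by
        rw [hc]
        rw [inv_mul_le_iff₀ (by linarith)]
        linarith
      simp only [Matrix.smul_apply, Matrix.add_apply, Matrix.one_apply_eq, smul_eq_mul]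
      have := hdiag i
      linarith
    · simp only [Matrix.smul_apply, Matrix.add_apply, Matrix.one_apply_ne h, smul_eq_mul,
        zero_add]
      calc c * Δ i j ≤ 1 * Δ i j := mul_le_mul_of_nonneg_right hc1 (hΔ i j)
        _ ≤ N i j := by rw [one_mul]; exact hoff i j h
  have hQ0 : ∀ i j, 0 ≤ (c • (1 + Δ)) i j := by
    intro i j
    by_cases h : i = j
    · subst h
      simp only [Matrix.smul_apply, Matrix.add_apply, Matrix.one_apply_eq, smul_eq_mul]
      have := hΔ i i
      positivity
    · simp only [Matrix.smul_apply, Matrix.add_apply, Matrix.one_apply_ne h, smul_eq_mul,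
        zero_add]
      exact mul_nonneg hc0.le (hΔ i j)
  have := (pow_entry_mono hQ0 key (n - 1)).2
  intro i j
  refine lt_of_lt_of_le ?_ (this i j)
  rw [smul_pow, Matrix.smul_apply, smul_eq_mul]
  exact mul_pos (pow_pos hc0 _) (hirr i j)

section spec

variable {n : ℕ}

attribute [local instance] Matrix.linftyOpNormedRing Matrix.linftyOpNormedAlgebra
  Matrix.linftyOpNormedSpace

noncomputable instance : CompleteSpace (Matrix (Fin n) (Fin n) ℂ) :=
  (by infer_instance : CompleteSpace (Fin n → Fin n → ℂ))

set_option maxHeartbeats 1000000 in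
/-- row-sum lower bound on the linfty operator norm -/
lemma row_sum_le_norm (A : Matrix (Fin n) (Fin n) ℂ) (i : Fin n) :
    (∑ j, ‖A i j‖) ≤ ‖A‖ := by
  rw [Matrix.linfty_opNorm_def]
  have h1 : (∑ j, ‖A i j‖₊) ≤ (Finset.univ : Finset (Fin n)).sup fun i => ∑ j, ‖A i j‖₊ :=
    Finset.le_sup (f := fun i => ∑ j, ‖A i j‖₊) (Finset.mem_univ i)
  calc (∑ j, ‖A i j‖) = ((∑ j, ‖A i j‖₊ : NNReal) : ℝ) := by
        push_cast [coe_nnnorm]; rfl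
    _ ≤ _ := by exact_mod_cast h1

set_option maxHeartbeats 1000000 in
lemma specRad_ne_top (hn : 0 < n) (M : Matrix (Fin n) (Fin n) ℝ) :
    spectralRadius ℂ (M.map (algebraMap ℝ ℂ)) ≠ ⊤ := by
  have : Nonempty (Fin n) := ⟨⟨0, hn⟩⟩
  exact ((spectrum.spectralRadius_le_nnnorm (M.map (algebraMap ℝ ℂ))).trans_lt
    ENNReal.coe_lt_top).ne

set_option maxHeartbeats 1000000 in
/-- Gelfand-based lower bound: a positive subinvariant vector bounds the spectral radius. -/
lemma le_specRad_of_subinvariant (hn : 0 < n) {M : Matrix (Fin n) (Fin n) ℝ}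
    (hM : ∀ i j, 0 ≤ M i j) {y : Fin n → ℝ} (hy : ∀ i, 0 < y i) {r : ℝ} (hr : 0 < r)
    (hsub : ∀ i, r * y i ≤ M.mulVec y i) : r ≤ specRad M := by
  have hne : (Finset.univ : Finset (Fin n)).Nonempty := ⟨⟨0, hn⟩, Finset.mem_univ _⟩
  -- powers of M applied to y
  have hMk : ∀ m : ℕ, (∀ i j, 0 ≤ (M ^ m) i j) ∧ (∀ i, r ^ m * y i ≤ (M ^ m).mulVec y i) := by
    intro m
    induction m with
    | zero =>
      refine ⟨fun i j => ?_, fun i => ?_⟩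
      · rw [pow_zero, Matrix.one_apply]; split <;> norm_num
      · simp [Matrix.one_mulVec]
    | succ m ih =>
      obtain ⟨ih1, ih2⟩ := ih
      constructor
      · intro i j
        rw [pow_succ', Matrix.mul_apply]
        exact Finset.sum_nonneg fun l _ => mul_nonneg (hM i l) (ih1 l j)
      · intro i
        have h1 : (M ^ (m+1)).mulVec y = M.mulVec ((M ^ m).mulVec y) := by
          rw [Matrix.mulVec_mulVec, ← pow_succ']
        rw [h1]
        have h2 : ∀ l, r ^ m * y l ≤ (M ^ m).mulVec y l := ih2
        have h3 : M.mulVec (fun l => r ^ m * y l) i ≤ M.mulVec ((M ^ m).mulVec y) i := by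
          rw [Matrix.mulVec, Matrix.mulVec, dotProduct, dotProduct]
          exact Finset.sum_le_sum fun l _ => mul_le_mul_of_nonneg_left (h2 l) (hM i l)
        refine le_trans ?_ h3
        have h4 : M.mulVec (fun l => r ^ m * y l) i = r ^ m * M.mulVec y i := by
          rw [Matrix.mulVec, Matrix.mulVec, dotProduct, dotProduct,
            Finset.mul_sum]
          congr 1; ext l; ring
        rw [h4]
        calc r ^ (m + 1) * y i = r ^ m * (r * y i) := by ring
          _ ≤ r ^ m * M.mulVec y i :=
            mul_le_mul_of_nonneg_left (hsub i) (pow_nonneg hr.le m)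
  -- norm lower bound
  set ymin := Finset.univ.inf' hne y with hymin
  set ymax := Finset.univ.sup' hne y with hymax
  have hymin0 : 0 < ymin := (Finset.lt_inf'_iff hne).mpr fun i _ => hy i
  have hymax0 : 0 < ymax :=
    lt_of_lt_of_le (hy ⟨0, hn⟩) (Finset.le_sup' (f := y) (Finset.mem_univ _))
  set c : ℝ := ymin / ymax with hc
  have hc0 : 0 < c := div_pos hymin0 hymax0
  set B := M.map (algebraMap ℝ ℂ) with hB
  have hBpow : ∀ m : ℕ, B ^ m = (M ^ m).map (algebraMap ℝ ℂ) := by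
    intro m
    rw [hB, ← RingHom.mapMatrix_apply, ← RingHom.mapMatrix_apply, map_pow]
  have hnormB : ∀ m : ℕ, c * r ^ m ≤ ‖B ^ m‖ := by
    intro m
    obtain ⟨hm1, hm2⟩ := hMk m
    set i0 : Fin n := ⟨0, hn⟩
    have hsum : (M ^ m).mulVec y i0 = ∑ j, (M ^ m) i0 j * y j := rfl
    have h5 : r ^ m * ymin ≤ ∑ j, (M ^ m) i0 j * y j := by
      rw [← hsum]
      have : r ^ m * ymin ≤ r ^ m * y i0 :=
        mul_le_mul_of_nonneg_left (Finset.inf'_le _ (Finset.mem_univ i0))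
          (pow_nonneg hr.le m)
      exact this.trans (hm2 i0)
    have h6 : (∑ j, (M ^ m) i0 j * y j) ≤ (∑ j, (M ^ m) i0 j) * ymax := by
      rw [Finset.sum_mul]
      exact Finset.sum_le_sum fun j _ =>
        mul_le_mul_of_nonneg_left (Finset.le_sup' _ (Finset.mem_univ j)) (hm1 i0 j)
    have h7 : c * r ^ m ≤ ∑ j, (M ^ m) i0 j := by
      rw [hc, div_mul_eq_mul_div, div_le_iff₀ hymax0]
      calc ymin * r ^ m = r ^ m * ymin := by ring
        _ ≤ ∑ j, (M ^ m) i0 j * y j := h5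
        _ ≤ (∑ j, (M ^ m) i0 j) * ymax := h6
    refine h7.trans ?_
    refine le_trans ?_ (row_sum_le_norm (B ^ m) i0)
    rw [hBpow m]
    refine le_of_eq (Finset.sum_congr rfl fun j _ => ?_)
    rw [Matrix.map_apply]
    have : (algebraMap ℝ ℂ) ((M ^ m) i0 j) = (((M ^ m) i0 j : ℝ) : ℂ) := rfl
    rw [this, Complex.norm_real, Real.norm_eq_abs, abs_of_nonneg (hm1 i0 j)]
  -- Gelfand
  have hG := spectrum.pow_nnnorm_pow_one_div_tendsto_nhds_spectralRadius B
  have key : ∀ r' : ℝ, 0 < r' → r' < r → ENNReal.ofReal r' ≤ spectralRadius ℂ B := by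
    intro r' hr'0 hr'r
    refine ge_of_tendsto hG ?_
    have hrr : (r' / r) < 1 := (div_lt_one hr).mpr hr'r
    have htend : Tendsto (fun m : ℕ => (r' / r) ^ m) atTop (nhds 0) :=
      tendsto_pow_atTop_nhds_zero_of_lt_one (by positivity) hrr
    have hev : ∀ᶠ m : ℕ in atTop, (r' / r) ^ m < c := htend.eventually_lt_const hc0
    filter_upwards [hev, Filter.eventually_ge_atTop 1] with m hm hm1
    have h8 : r' ^ m ≤ c * r ^ m := by
      have : r' ^ m = (r' / r) ^ m * r ^ m := by
        rw [div_pow, div_mul_cancel₀]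
        positivity
      rw [this]
      exact mul_le_mul_of_nonneg_right hm.le (by positivity)
    have h9 : ENNReal.ofReal (r' ^ m) ≤ (‖B ^ m‖₊ : ENNReal) := by
      rw [← ENNReal.ofReal_coe_nnreal, coe_nnnorm]
      exact ENNReal.ofReal_le_ofReal (h8.trans (hnormB m))
    have h10 : (ENNReal.ofReal (r' ^ m)) ^ (1 / (m : ℝ)) ≤ (‖B ^ m‖₊ : ENNReal) ^ (1 / (m : ℝ)) :=
      ENNReal.rpow_le_rpow h9 (by positivity)
    refine le_trans (le_of_eq ?_) h10
    rw [ENNReal.ofReal_pow hr'0.le, ← ENNReal.rpow_natCast, ← ENNReal.rpow_mul]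
    rw [mul_one_div, div_self (by exact_mod_cast Nat.one_le_iff_ne_zero.mp hm1), ENNReal.rpow_one]
  -- conclude
  have hfin := specRad_ne_top hn M
  rw [specRad]
  by_contra hcon
  push_neg at hcon
  -- toReal < r ; pick r' between
  set t := (spectralRadius ℂ B).toReal with ht
  have ht0 : 0 ≤ t := ENNReal.toReal_nonneg
  set r' := (max t 0 + r) / 2 with hr'
  have h11 : t < r' := by
    rw [hr']
    have := le_max_left t 0
    linarith [hcon]
  have h12 : 0 < r' := by
    rw [hr']
    have := le_max_right t 0
    linarith
  have h13 : r' < r := by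
    rw [hr']
    rw [max_eq_left ht0]
    linarith [hcon]
  have := key r' h12 h13
  rw [ENNReal.ofReal_le_iff_le_toReal hfin] at this
  linarith


variable {n : ℕ}

attribute [local instance] Matrix.linftyOpNormedRing Matrix.linftyOpNormedAlgebra
  Matrix.linftyOpNormedSpace

noncomputable instance inst_s14 : CompleteSpace (Matrix (Fin n) (Fin n) ℂ) :=
  (by infer_instance : CompleteSpace (Fin n → Fin n → ℂ))

set_option maxHeartbeats 1000000 in
/-- From `s < specRad M` extract a complex eigenvalue of modulus `> s` with eigenvector. -/
lemma exists_eigen_of_lt_specRad (hn : 0 < n) (M : Matrix (Fin n) (Fin n) ℝ) {s : ℝ}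
    (hs : s < specRad M) :
    ∃ (lam : ℂ) (v : Fin n → ℂ), v ≠ 0 ∧
      (M.map (algebraMap ℝ ℂ)).mulVec v = lam • v ∧ s < ‖lam‖ := by
  have : Nonempty (Fin n) := ⟨⟨0, hn⟩⟩
  set B := M.map (algebraMap ℝ ℂ) with hB
  have hfin : spectralRadius ℂ B ≠ ⊤ :=
    ((spectrum.spectralRadius_le_nnnorm B).trans_lt ENNReal.coe_lt_top).ne
  -- find lam in spectrum with s < ‖lam‖
  obtain ⟨lam, hmem, hlam⟩ : ∃ lam ∈ spectrum ℂ B, s < ‖lam‖ := by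
    by_cases hs0 : s < 0
    · obtain ⟨lam, hmem⟩ := spectrum.nonempty B
      exact ⟨lam, hmem, lt_of_lt_of_le hs0 (norm_nonneg lam)⟩
    · push_neg at hs0
      have h1 : ENNReal.ofReal s < spectralRadius ℂ B := by
        rw [ENNReal.ofReal_lt_iff_lt_toReal hs0 hfin]
        exact hs
      rw [spectralRadius] at h1
      obtain ⟨lam, hlam2⟩ := lt_iSup_iff.mp h1
      obtain ⟨hmem, hlam3⟩ := lt_iSup_iff.mp hlam2
      refine ⟨lam, hmem, ?_⟩
      have := ENNReal.ofReal_lt_iff_lt_toReal hs0 (ENNReal.coe_ne_top (r := ‖lam‖₊)) |>.mp hlam3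
      simpa using this
  -- eigenvector
  rw [spectrum.mem_iff] at hmem
  have hdet : (algebraMap ℂ (Matrix (Fin n) (Fin n) ℂ) lam - B).det = 0 := by
    by_contra h
    exact hmem ((Matrix.isUnit_iff_isUnit_det _).mpr (isUnit_iff_ne_zero.mpr h))
  obtain ⟨v, hv0, hv⟩ := (Matrix.exists_mulVec_eq_zero_iff).mpr hdet
  refine ⟨lam, v, hv0, ?_, hlam⟩
  have halg : algebraMap ℂ (Matrix (Fin n) (Fin n) ℂ) lam = lam • (1 : Matrix (Fin n) (Fin n) ℂ) :=
    Algebra.algebraMap_eq_smul_one lam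
  rw [halg, Matrix.sub_mulVec, Matrix.smul_mulVec, Matrix.one_mulVec, sub_eq_zero] at hv
  exact hv.symm


end spec
set_option maxHeartbeats 1000000 in
/-- If `s < specRad M` for a nonnegative irreducible `M`, there is a strictly positive
vector `y` with `M y > s y` componentwise. -/
lemma exists_pos_subinv (hn : 0 < n) {M : Matrix (Fin n) (Fin n) ℝ}
    (hM : ∀ i j, 0 ≤ M i j) (hP : ∀ i j, 0 < ((1 + M) ^ (n - 1)) i j)
    {s : ℝ} (hs : s < specRad M) :
    ∃ y : Fin n → ℝ, (∀ i, 0 < y i) ∧ ∀ i, s * y i < M.mulVec y i := by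
  obtain ⟨lam, v, hv0, hv, hlam⟩ := exists_eigen_of_lt_specRad hn M hs
  set u : Fin n → ℝ := fun i => ‖v i‖ with hu_def
  have hu : ∀ i, 0 ≤ u i := fun i => norm_nonneg _
  have hu0 : u ≠ 0 := by
    obtain ⟨i, hi⟩ := Function.ne_iff.mp hv0
    intro h
    exact hi (norm_eq_zero.mp (congrFun h i))
  have hkey : ∀ i, ‖lam‖ * u i ≤ M.mulVec u i := by
    intro i
    have h1 : ‖lam‖ * u i = ‖(M.map (algebraMap ℝ ℂ)).mulVec v i‖ := by
      rw [hv]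
      simp [hu_def, norm_smul]
    have h2 : (M.map (algebraMap ℝ ℂ)).mulVec v i = ∑ j, ((M i j : ℝ) : ℂ) * v j := rfl
    have h3 : M.mulVec u i = ∑ j, M i j * u j := rfl
    rw [h1, h2, h3]
    refine (norm_sum_le _ _).trans (le_of_eq ?_)
    refine Finset.sum_congr rfl fun j _ => ?_
    rw [norm_mul, Complex.norm_real, Real.norm_eq_abs, abs_of_nonneg (hM i j)]
  set P := (1 + M) ^ (n - 1) with hPdef
  have hPnn : ∀ i j, 0 ≤ P i j := fun i j => (hP i j).le
  set y := P.mulVec u with hy_def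
  have hy : ∀ i, 0 < y i := mulVec_pos' hP hu hu0
  have hcomm : M * P = P * M := by
    have hc : Commute M (1 + M) := (Commute.one_right M).add_right (Commute.refl M)
    exact (hc.pow_right (n - 1)).eq
  have hswap : M.mulVec y = P.mulVec (M.mulVec u) := by
    rw [hy_def, Matrix.mulVec_mulVec, Matrix.mulVec_mulVec, hcomm]
  set d : Fin n → ℝ := fun i => M.mulVec u i - ‖lam‖ * u i with hd_def
  have hd : ∀ i, 0 ≤ d i := fun i => sub_nonneg.mpr (hkey i)
  have hPd : ∀ i, 0 ≤ P.mulVec d i := mulVec_nonneg' hPnn hd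
  have hMy : ∀ i, ‖lam‖ * y i ≤ M.mulVec y i := by
    intro i
    have h4 : P.mulVec d i = P.mulVec (M.mulVec u) i - ‖lam‖ * y i := by
      have : d = M.mulVec u - ‖lam‖ • u := by
        funext k; simp [hd_def]
      rw [this, Matrix.mulVec_sub, Matrix.mulVec_smul]
      simp [hy_def]
    have := hPd i
    rw [h4] at this
    rw [hswap]
    linarith
  exact ⟨y, hy, fun i =>
    lt_of_lt_of_le (by exact mul_lt_mul_of_pos_right hlam (hy i)) (hMy i)⟩

set_option maxHeartbeats 1000000 in
/-- A nonnegative strict subinvariant vector for an irreducible nonnegative matrix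
forces `s < specRad M`. -/
lemma lt_specRad_of_strict_subinv (hn : 0 < n) {M : Matrix (Fin n) (Fin n) ℝ}
    (hM : ∀ i j, 0 ≤ M i j) (hP : ∀ i j, 0 < ((1 + M) ^ (n - 1)) i j)
    {u : Fin n → ℝ} (hu : ∀ i, 0 ≤ u i) {s : ℝ}
    (h1 : ∀ i, s * u i ≤ M.mulVec u i) (h2 : ∃ i, s * u i < M.mulVec u i) :
    s < specRad M := by
  have hu0 : u ≠ 0 := by
    rintro rfl
    obtain ⟨i, hi⟩ := h2
    rw [Matrix.mulVec_zero] at hi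
    simp at hi
  set P := (1 + M) ^ (n - 1) with hPdef
  have hPnn : ∀ i j, 0 ≤ P i j := fun i j => (hP i j).le
  set d : Fin n → ℝ := fun i => M.mulVec u i - s * u i with hd_def
  have hd : ∀ i, 0 ≤ d i := fun i => sub_nonneg.mpr (h1 i)
  have hd0 : d ≠ 0 := by
    obtain ⟨i, hi⟩ := h2
    intro h
    have := congrFun h i
    simp only [hd_def, Pi.zero_apply] at this
    linarith
  set y := P.mulVec u with hy_def
  have hy : ∀ i, 0 < y i := mulVec_pos' hP hu hu0
  have hcomm : M * P = P * M := by
    have hc : Commute M (1 + M) := (Commute.one_right M).add_right (Commute.refl M)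
    exact (hc.pow_right (n - 1)).eq
  have hstrict : ∀ i, s * y i < M.mulVec y i := by
    intro i
    have hPd : 0 < P.mulVec d i := mulVec_pos' hP hd hd0 i
    have h4 : P.mulVec d i = P.mulVec (M.mulVec u) i - s * y i := by
      have : d = M.mulVec u - s • u := by
        funext k; simp [hd_def]
      rw [this, Matrix.mulVec_sub, Matrix.mulVec_smul]
      simp [hy_def]
    have hswap : M.mulVec y = P.mulVec (M.mulVec u) := by
      rw [hy_def, Matrix.mulVec_mulVec, Matrix.mulVec_mulVec, hcomm]
    rw [hswap]
    linarith
  by_cases hs0 : s < 0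
  · exact lt_of_lt_of_le hs0 (specRad_nonneg M)
  · push_neg at hs0
    have hne : (Finset.univ : Finset (Fin n)).Nonempty := ⟨⟨0, hn⟩, Finset.mem_univ _⟩
    set r : ℝ := Finset.univ.inf' hne (fun i => M.mulVec y i / y i) with hr_def
    have hsr : s < r := by
      rw [hr_def, Finset.lt_inf'_iff]
      intro i _
      rw [lt_div_iff₀ (hy i)]
      calc s * y i < M.mulVec y i := hstrict i
        _ = M.mulVec y i := rfl
    have hr0 : 0 < r := lt_of_le_of_lt hs0 hsr
    have hrsub : ∀ i, r * y i ≤ M.mulVec y i := by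
      intro i
      have : r ≤ M.mulVec y i / y i :=
        Finset.inf'_le (f := fun i => M.mulVec y i / y i) (Finset.mem_univ i)
      rw [le_div_iff₀ (hy i)] at this
      linarith
    exact lt_of_lt_of_le hsr (le_specRad_of_subinvariant hn hM hy hr0 hrsub)
set_option maxHeartbeats 2000000 in
theorem stmt_14 {n : ℕ} (Al Au : Matrix (Fin n) (Fin n) ℝ)
    (hle : ∀ i j, Al i j ≤ Au i j)
    (Ac : Matrix (Fin n) (Fin n) ℝ) (hAc : Ac = (1/2 : ℝ) • (Al + Au)) (Δ : Matrix (Fin n) (Fin n) ℝ) (hΔ : Δ = (1/2 : ℝ) • (Au - Al))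
    (hM : IsMMatrix Ac) (hirr : IrreducibleMat Δ) :
    (∀ A : Matrix (Fin n) (Fin n) ℝ, memInterval Al Au A → ColumnSufficient A) ↔ IsM0Matrix Al := by
  obtain ⟨s₀, N₀, hN₀, hAcd, hρ₀⟩ := hM
  have hAl : ∀ i j, Al i j = Ac i j - Δ i j := by
    intro i j
    rw [hAc, hΔ]
    simp only [Matrix.smul_apply, Matrix.add_apply, Matrix.sub_apply, smul_eq_mul]
    ring
  have hAu : ∀ i j, Au i j = Ac i j + Δ i j := by
    intro i j
    rw [hAc, hΔ]
    simp only [Matrix.smul_apply, Matrix.add_apply, Matrix.sub_apply, smul_eq_mul]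
    ring
  have hΔ0 : ∀ i j, 0 ≤ Δ i j := by
    intro i j
    rw [hΔ]
    simp only [Matrix.smul_apply, Matrix.sub_apply, smul_eq_mul]
    linarith [hle i j]
  have hAcoff : ∀ i j, i ≠ j → Ac i j ≤ 0 := by
    intro i j hij
    rw [hAcd]
    simp only [Matrix.sub_apply, Matrix.smul_apply, Matrix.one_apply_ne hij, smul_eq_mul,
      mul_zero, zero_sub]
    linarith [hN₀ i j]
  constructor
  · -- strong column sufficiency → Al is an M0-matrix
    intro hCS
    set M : Matrix (Fin n) (Fin n) ℝ := N₀ + Δ with hMdef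
    have hMnn : ∀ i j, 0 ≤ M i j := fun i j => add_nonneg (hN₀ i j) (hΔ0 i j)
    have hAlM : Al = s₀ • (1 : Matrix (Fin n) (Fin n) ℝ) - M := by
      ext i j
      rw [hAl i j, hAcd]
      simp only [Matrix.sub_apply, Matrix.smul_apply, Matrix.add_apply, smul_eq_mul, hMdef]
      ring
    by_cases hcase : specRad M ≤ s₀
    · exact ⟨s₀, M, hMnn, hAlM, hcase⟩
    · push_neg at hcase
      exfalso
      have hn : 0 < n := by
        by_contra h
        push_neg at h
        have hn0 : n = 0 := by omega
        subst hn0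
        have hMN : M = N₀ := by
          ext i j
          exact i.elim0
        rw [hMN] at hcase
        linarith
      have hirrM : ∀ i j, 0 < ((1 + M) ^ (n - 1)) i j := by
        refine irr_transfer hn hΔ0 (fun i => add_nonneg (hN₀ i i) (hΔ0 i i)) ?_ hirr
        intro i j _
        simp only [hMdef, Matrix.add_apply]
        linarith [hN₀ i j]
      obtain ⟨y, hy, hstrict⟩ := exists_pos_subinv hn hMnn hirrM hcase
      have hAly : ∀ i, Al.mulVec y i < 0 := by
        intro i
        have h1 : Al.mulVec y i = s₀ * y i - M.mulVec y i := by
          rw [hAlM, Matrix.sub_mulVec, Matrix.smul_mulVec, Matrix.one_mulVec]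
          simp
        rw [h1]
        linarith [hstrict i]
      have hmem : memInterval Al Au Al := fun i j => ⟨le_refl _, hle i j⟩
      haveI : IsEmpty ↥(∅ : Finset (Fin n)) := ⟨fun a => (Finset.notMem_empty _ a.2)⟩
      set x : (↥(Finset.univ : Finset (Fin n)) ⊕ ↥(∅ : Finset (Fin n))) → ℝ :=
        Sum.elim (fun i => y ↑i) (fun _ => 1) with hxdef
      have hval : ∀ i : ↥(Finset.univ : Finset (Fin n)),
          (csBlock Al Finset.univ ∅).mulVec x (Sum.inl i) = Al.mulVec y ↑i := by
        intro i
        rw [Matrix.mulVec, dotProduct, Fintype.sum_sum_type]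
        have h2 : (∑ b : ↥(∅ : Finset (Fin n)),
            csBlock Al Finset.univ ∅ (Sum.inl i) (Sum.inr b) * x (Sum.inr b)) = 0 := by
          simp
        rw [h2, add_zero]
        have h3 : ∀ a : ↥(Finset.univ : Finset (Fin n)),
            csBlock Al Finset.univ ∅ (Sum.inl i) (Sum.inl a) * x (Sum.inl a)
              = Al ↑i ↑a * y ↑a := by
          intro a
          rfl
        rw [Finset.sum_congr rfl (fun a _ => h3 a)]
        rw [Matrix.mulVec, dotProduct]
        exact Fintype.sum_equiv (Equiv.subtypeUnivEquiv (fun z => Finset.mem_univ z)) _ _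
          (fun a => rfl)
      refine hCS Al hmem Finset.univ ∅ (Finset.disjoint_empty_right _) ?_ ⟨x, ?_, ?_, ?_⟩
      · rw [Finset.union_empty]
        exact ⟨⟨0, hn⟩, Finset.mem_univ _⟩
      · intro k
        match k with
        | Sum.inl i => rw [hval i]; exact (hAly ↑i).le
        | Sum.inr b => exact absurd b.2 (Finset.notMem_empty _)
      · intro h0
        have := congrFun h0 (Sum.inl ⟨⟨0, hn⟩, Finset.mem_univ _⟩)
        rw [hval] at this
        rw [Pi.zero_apply] at this
        exact absurd this (ne_of_lt (hAly _))
      · intro k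
        match k with
        | Sum.inl i => exact hy ↑i
        | Sum.inr b => exact one_pos
  · -- Al is an M0-matrix → strong column sufficiency
    rintro ⟨s, N, hN, hAlN, hρ⟩ A hA I J hdisj hne ⟨x, hx1, hx2, hx3⟩
    obtain ⟨k₀, hk₀⟩ := hne
    have hnn : 0 < n := k₀.pos
    -- extension of x to a nonnegative vector on Fin n
    set w : Fin n → ℝ := fun k =>
      if h : k ∈ I then x (Sum.inl ⟨k, h⟩)
      else if h' : k ∈ J then x (Sum.inr ⟨k, h'⟩) else 0 with hwdef
    have hw0 : ∀ k, 0 ≤ w k := by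
      intro k
      rw [hwdef]
      dsimp only
      split_ifs with h h'
      · exact (hx3 _).le
      · exact (hx3 _).le
      · exact le_refl 0
    have hwI : ∀ a : ↥I, w ↑a = x (Sum.inl a) := by
      intro a
      rw [hwdef]
      dsimp only
      rw [dif_pos a.2]
    have hwJ : ∀ b : ↥J, w ↑b = x (Sum.inr b) := by
      intro b
      have hbI : ↑b ∉ I := Finset.disjoint_right.mp hdisj b.2
      rw [hwdef]
      dsimp only
      rw [dif_neg hbI, dif_pos b.2]
    have hwout : ∀ k, k ∉ I → k ∉ J → w k = 0 := by
      intro k h h'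
      rw [hwdef]
      dsimp only
      rw [dif_neg h, dif_neg h']
    -- |A i j| ≤ - Al i j off the diagonal
    have habs : ∀ i j, i ≠ j → |A i j| ≤ -Al i j := by
      intro i j hij
      rw [abs_le]
      constructor
      · rw [neg_neg]
        exact (hA i j).1
      · have h4 : A i j ≤ Au i j := (hA i j).2
        rw [hAu i j] at h4
        rw [hAl i j]
        have := hAcoff i j hij
        linarith
    have hAAl : ∀ i j, Al i j ≤ A i j := fun i j => (hA i j).1
    -- splitting the Al-sum
    have hsplit : ∀ k, Al.mulVec w k =
        (∑ a : ↥I, Al k ↑a * x (Sum.inl a)) + (∑ b : ↥J, Al k ↑b * x (Sum.inr b)) := by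
      intro k
      rw [Matrix.mulVec, dotProduct]
      have h5 : ∀ s' : Finset (Fin n), (∑ l ∈ s', Al k l * w l) = ∑ l : ↥s', Al k ↑l * w ↑l :=
        fun s' => (Finset.sum_coe_sort s' (fun l => Al k l * w l)).symm
      have h6 : (∑ l : Fin n, Al k l * w l) = ∑ l ∈ I ∪ J, Al k l * w l := by
        rw [← Finset.sum_subset (Finset.subset_univ (I ∪ J))]
        intro l _ hl
        rw [Finset.mem_union] at hl
        push_neg at hl
        rw [hwout l hl.1 hl.2, mul_zero]
      rw [h6, Finset.sum_union hdisj, h5 I, h5 J]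
      congr 1
      · exact Finset.sum_congr rfl fun a _ => by rw [hwI a]
      · exact Finset.sum_congr rfl fun b _ => by rw [hwJ b]
    -- the block products
    have hBI : ∀ i : ↥I, (csBlock A I J).mulVec x (Sum.inl i) =
        (∑ a : ↥I, A ↑i ↑a * x (Sum.inl a)) + (∑ b : ↥J, -(A ↑i ↑b) * x (Sum.inr b)) := by
      intro i
      rw [Matrix.mulVec, dotProduct, Fintype.sum_sum_type]
      rfl
    have hBJ : ∀ j : ↥J, (csBlock A I J).mulVec x (Sum.inr j) =
        (∑ a : ↥I, -(A ↑j ↑a) * x (Sum.inl a)) + (∑ b : ↥J, A ↑j ↑b * x (Sum.inr b)) := by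
      intro j
      rw [Matrix.mulVec, dotProduct, Fintype.sum_sum_type]
      rfl
    -- bounds
    have hIbound : ∀ i : ↥I, Al.mulVec w ↑i ≤ (csBlock A I J).mulVec x (Sum.inl i) := by
      intro i
      rw [hsplit ↑i, hBI i]
      refine add_le_add
        (Finset.sum_le_sum fun a _ =>
          mul_le_mul_of_nonneg_right (hAAl ↑i ↑a) (hx3 (Sum.inl a)).le)
        (Finset.sum_le_sum fun b _ =>
          mul_le_mul_of_nonneg_right ?_ (hx3 (Sum.inr b)).le)
      have hne' : (↑i : Fin n) ≠ ↑b := by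
        intro hh
        exact Finset.disjoint_left.mp hdisj i.2 (hh ▸ b.2)
      have h7 := habs ↑i ↑b hne'
      have h8 := le_abs_self (A ↑i ↑b)
      linarith
    have hJbound : ∀ j : ↥J, Al.mulVec w ↑j ≤ (csBlock A I J).mulVec x (Sum.inr j) := by
      intro j
      rw [hsplit ↑j, hBJ j]
      refine add_le_add
        (Finset.sum_le_sum fun a _ =>
          mul_le_mul_of_nonneg_right ?_ (hx3 (Sum.inl a)).le)
        (Finset.sum_le_sum fun b _ =>
          mul_le_mul_of_nonneg_right (hAAl ↑j ↑b) (hx3 (Sum.inr b)).le)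
      have hne' : (↑j : Fin n) ≠ ↑a := by
        intro hh
        exact Finset.disjoint_left.mp hdisj (hh ▸ a.2) j.2
      have h7 := habs ↑j ↑a hne'
      have h8 := le_abs_self (A ↑j ↑a)
      linarith
    have hOut : ∀ k, k ∉ I → k ∉ J → Al.mulVec w k ≤ 0 := by
      intro k hkI hkJ
      rw [hsplit k]
      have hterm : ∀ l : Fin n, k ≠ l → Al k l ≤ 0 := by
        intro l hkl
        have h7 := habs k l hkl
        have h8 := abs_nonneg (A k l)
        linarith
      refine add_nonpos (Finset.sum_nonpos fun a _ => ?_) (Finset.sum_nonpos fun b _ => ?_)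
      · exact mul_nonpos_of_nonpos_of_nonneg
          (hterm ↑a (fun hh => hkI (hh ▸ a.2))) (hx3 (Sum.inl a)).le
      · exact mul_nonpos_of_nonpos_of_nonneg
          (hterm ↑b (fun hh => hkJ (hh ▸ b.2))) (hx3 (Sum.inr b)).le
    have hAlw0 : ∀ k, Al.mulVec w k ≤ 0 := by
      intro k
      by_cases hkI : k ∈ I
      · exact (hIbound ⟨k, hkI⟩).trans (hx1 (Sum.inl ⟨k, hkI⟩))
      · by_cases hkJ : k ∈ J
        · exact (hJbound ⟨k, hkJ⟩).trans (hx1 (Sum.inr ⟨k, hkJ⟩))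
        · exact hOut k hkI hkJ
    have hstrictk : ∃ k, Al.mulVec w k < 0 := by
      obtain ⟨κ, hκ⟩ := Function.ne_iff.mp hx2
      match κ with
      | Sum.inl i =>
        refine ⟨↑i, lt_of_le_of_lt (hIbound i) ?_⟩
        exact lt_of_le_of_ne (hx1 (Sum.inl i)) hκ
      | Sum.inr j =>
        refine ⟨↑j, lt_of_le_of_lt (hJbound j) ?_⟩
        exact lt_of_le_of_ne (hx1 (Sum.inr j)) hκ
    -- translate into subinvariance for N
    have hAlNw : ∀ k, Al.mulVec w k = s * w k - N.mulVec w k := by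
      intro k
      rw [hAlN, Matrix.sub_mulVec, Matrix.smul_mulVec, Matrix.one_mulVec]
      simp
    have h1 : ∀ k, s * w k ≤ N.mulVec w k := by
      intro k
      have := hAlw0 k
      rw [hAlNw k] at this
      linarith
    have h2 : ∃ k, s * w k < N.mulVec w k := by
      obtain ⟨k, hk⟩ := hstrictk
      rw [hAlNw k] at hk
      exact ⟨k, by linarith⟩
    -- N is irreducible
    have hNeq : N = s • (1 : Matrix (Fin n) (Fin n) ℝ) - Al := by
      rw [hAlN]
      abel
    have hNoff : ∀ i j, i ≠ j → Δ i j ≤ N i j := by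
      intro i j hij
      have h9 : N i j = -Al i j := by
        rw [hNeq]
        simp [Matrix.sub_apply, Matrix.smul_apply, Matrix.one_apply_ne hij]
      rw [h9, hAl i j]
      have := hAcoff i j hij
      linarith
    have hPpos := irr_transfer hnn hΔ0 (fun i => hN i i) hNoff hirr
    have hfinal := lt_specRad_of_strict_subinv hnn hN hPpos hw0 h1 h2
    linarith
end

section
/- Let [A] be an interval matrix with midpoint Ac = I (the identity matrix) and radius Δ = (1/2)(Ā−A̲), and suppose Δ is irreducible. Then [A] is strongly column sufficient if and only if ρ(Δ) ≤ 1. -/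
open Matrix

open Filter Topology
open scoped ENNReal

namespace CSAux

attribute [local instance] Matrix.linftyOpNormedRing Matrix.linftyOpNormedAlgebra

noncomputable instance matCS {n : ℕ} : CompleteSpace (Matrix (Fin n) (Fin n) ℂ) :=
  FiniteDimensional.complete ℂ (Matrix (Fin n) (Fin n) ℂ)

lemma map_matrix_pow {n : ℕ} (Δ : Matrix (Fin n) (Fin n) ℝ) (k : ℕ) :
    (Δ.map (algebraMap ℝ ℂ)) ^ k = (Δ ^ k).map (algebraMap ℝ ℂ) := by
  simpa [RingHom.mapMatrix_apply] using (map_pow ((algebraMap ℝ ℂ).mapMatrix) Δ k).symm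

lemma mulVec_map {n : ℕ} (B : Matrix (Fin n) (Fin n) ℝ) (w : Fin n → ℝ) :
    (B.map (algebraMap ℝ ℂ)) *ᵥ (fun i => (w i : ℂ)) = fun i => ((B *ᵥ w) i : ℂ) := by
  funext i
  simp [Matrix.mulVec, dotProduct, Matrix.map_apply]

lemma pow_entry_nonneg {n : ℕ} {N : Matrix (Fin n) (Fin n) ℝ} (hN : ∀ i j, 0 ≤ N i j) :
    ∀ k i j, 0 ≤ (N ^ k) i j := by
  intro k
  induction k with
  | zero => intro i j; by_cases h : i = j <;> simp [h, Matrix.one_apply]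
  | succ k ih =>
    intro i j
    rw [pow_succ, Matrix.mul_apply]
    exact Finset.sum_nonneg fun l _ => mul_nonneg (ih i l) (hN l j)

lemma mulVec_le_mulVec {n : ℕ} {N : Matrix (Fin n) (Fin n) ℝ} (hN : ∀ i j, 0 ≤ N i j)
    {u v : Fin n → ℝ} (h : ∀ j, u j ≤ v j) : ∀ i, (N *ᵥ u) i ≤ (N *ᵥ v) i := by
  intro i
  simp only [Matrix.mulVec, dotProduct]
  exact Finset.sum_le_sum fun j _ => mul_le_mul_of_nonneg_left (h j) (hN i j)

lemma le_specRad_of_mulVec {n : ℕ} (hn : 0 < n) {N : Matrix (Fin n) (Fin n) ℝ}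
    (hN : ∀ i j, 0 ≤ N i j) {w : Fin n → ℝ} (hw : ∀ i, 0 < w i) {c : ℝ} (hc : 0 ≤ c)
    (h : ∀ i, c * w i ≤ (N *ᵥ w) i) : c ≤ specRad N := by
  haveI : Nonempty (Fin n) := ⟨⟨0, hn⟩⟩
  -- iterated inequality
  have hiter : ∀ k i, c ^ k * w i ≤ ((N ^ k) *ᵥ w) i := by
    intro k
    induction k with
    | zero => intro i; simp [Matrix.one_mulVec]
    | succ k ih =>
      intro i
      have h1 : ∀ j, c ^ k * w j ≤ ((N ^ k) *ᵥ w) j := ih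
      have h2 : ((N ^ (k+1)) *ᵥ w) i = (N *ᵥ ((N ^ k) *ᵥ w)) i := by
        rw [Matrix.mulVec_mulVec, ← pow_succ']
      rw [h2]
      calc c ^ (k+1) * w i = c ^ k * (c * w i) := by ring
        _ ≤ c ^ k * (N *ᵥ w) i := by
            exact mul_le_mul_of_nonneg_left (h i) (pow_nonneg hc k)
        _ = (N *ᵥ fun j => c ^ k * w j) i := by
            simp only [Matrix.mulVec, dotProduct, Finset.mul_sum]
            exact Finset.sum_congr rfl fun j _ => by ring
        _ ≤ (N *ᵥ ((N ^ k) *ᵥ w)) i := mulVec_le_mulVec hN h1 i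
  obtain ⟨i0, -, hi0⟩ := Finset.exists_min_image Finset.univ w ⟨_, Finset.mem_univ (Classical.arbitrary (Fin n))⟩
  obtain ⟨i1, -, hi1⟩ := Finset.exists_max_image Finset.univ w ⟨_, Finset.mem_univ (Classical.arbitrary (Fin n))⟩
  set Mc := N.map (algebraMap ℝ ℂ) with hMc
  have hw1 : (0:ℝ) < w i1 := hw i1
  have hkey : ∀ k, c ^ k * (w i0 / w i1) ≤ ‖Mc ^ k‖ := by
    intro k
    have hv : ‖(fun i => (w i : ℂ))‖ ≤ w i1 := by
      rw [pi_norm_le_iff_of_nonneg hw1.le]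
      intro i
      rw [Complex.norm_real, Real.norm_eq_abs, abs_of_pos (hw i)]
      exact hi1 i (Finset.mem_univ i)
    have hmv : ‖(Mc ^ k) *ᵥ (fun i => (w i : ℂ))‖ ≤ ‖Mc ^ k‖ * w i1 :=
      le_trans (Matrix.linfty_opNorm_mulVec _ _)
        (mul_le_mul_of_nonneg_left hv (norm_nonneg _))
    have hent : c ^ k * w i0 ≤ ‖(Mc ^ k) *ᵥ (fun i => (w i : ℂ))‖ := by
      rw [hMc, map_matrix_pow, mulVec_map]
      calc c ^ k * w i0 ≤ c ^ k * w i0 := le_rfl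
        _ ≤ ((N ^ k) *ᵥ w) i0 := hiter k i0
        _ ≤ ‖(((N ^ k) *ᵥ w) i0 : ℂ)‖ := by
            rw [Complex.norm_real]; exact le_abs_self _
        _ ≤ ‖fun i => (((N ^ k) *ᵥ w) i : ℂ)‖ :=
            norm_le_pi_norm (fun i => (((N ^ k) *ᵥ w) i : ℂ)) i0
    calc c ^ k * (w i0 / w i1) = (c ^ k * w i0) / w i1 := by ring
      _ ≤ (‖Mc ^ k‖ * w i1) / w i1 := (div_le_div_iff_of_pos_right hw1).mpr (hent.trans hmv)
      _ = ‖Mc ^ k‖ := by field_simp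
  have hγ : 0 < w i0 / w i1 := div_pos (hw i0) hw1
  set γ := w i0 / w i1 with hγdef
  have hfin : spectralRadius ℂ Mc ≠ ⊤ :=
    ne_top_of_le_ne_top ENNReal.coe_ne_top (spectrum.spectralRadius_le_nnnorm (𝕜 := ℂ) Mc)
  have hG0 := spectrum.pow_norm_pow_one_div_tendsto_nhds_spectralRadius Mc
  have hG : Tendsto (fun k : ℕ => ‖Mc ^ k‖ ^ (1/(k:ℝ))) atTop (𝓝 (specRad N)) := by
    have h2 := (ENNReal.tendsto_toReal hfin).comp hG0
    have heq : ((fun x : ℝ≥0∞ => x.toReal) ∘ fun k : ℕ => ENNReal.ofReal (‖Mc ^ k‖ ^ (1/(k:ℝ))))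
        = fun k : ℕ => ‖Mc ^ k‖ ^ (1/(k:ℝ)) := by
      funext k
      simp only [Function.comp_apply,
        ENNReal.toReal_ofReal (Real.rpow_nonneg (norm_nonneg _) _)]
    rw [heq] at h2
    exact h2
  have hf : Tendsto (fun k : ℕ => γ ^ ((1:ℝ)/(k:ℝ)) * c) atTop (𝓝 c) := by
    have h0 : Tendsto (fun k : ℕ => (1:ℝ)/(k:ℝ)) atTop (𝓝 0) :=
      tendsto_one_div_atTop_nhds_zero_nat
    have h1 : ContinuousAt (fun t : ℝ => γ ^ t * c) 0 :=
      (Real.continuousAt_const_rpow hγ.ne').mul continuousAt_const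
    have h2 := h1.tendsto.comp h0
    simpa [Function.comp_def] using h2
  refine le_of_tendsto_of_tendsto hf hG ?_
  filter_upwards [eventually_ge_atTop 1] with k hk
  have hk0 : (k:ℝ) ≠ 0 := by
    have : (1:ℝ) ≤ (k:ℝ) := by exact_mod_cast hk
    linarith
  have h1 : (0:ℝ) ≤ c ^ k * γ := mul_nonneg (pow_nonneg hc k) hγ.le
  calc γ ^ ((1:ℝ)/(k:ℝ)) * c = (c ^ k * γ) ^ ((1:ℝ)/(k:ℝ)) := by
        rw [Real.mul_rpow (pow_nonneg hc k) hγ.le]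
        rw [← Real.rpow_natCast c k, ← Real.rpow_mul hc]
        rw [mul_one_div, div_self hk0, Real.rpow_one]
        ring
    _ ≤ ‖Mc ^ k‖ ^ ((1:ℝ)/(k:ℝ)) :=
        Real.rpow_le_rpow h1 (hkey k) (by positivity)

lemma exists_perron {n : ℕ} (hn : 0 < n) (Δ : Matrix (Fin n) (Fin n) ℝ)
    (hΔ : ∀ i j, 0 ≤ Δ i j) :
    ∃ x : Fin n → ℝ, (∀ i, 0 ≤ x i) ∧ x ≠ 0 ∧ ∀ i, specRad Δ * x i ≤ (Δ *ᵥ x) i := by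
  haveI : Nonempty (Fin n) := ⟨⟨0, hn⟩⟩
  haveI : Nontrivial (Matrix (Fin n) (Fin n) ℂ) := by infer_instance
  set Mc := Δ.map (algebraMap ℝ ℂ) with hMc
  obtain ⟨z, hz, hznorm⟩ := spectrum.exists_nnnorm_eq_spectralRadius (a := Mc)
  have hρ : specRad Δ = ‖z‖ := by
    rw [specRad, ← hMc, ← hznorm, ENNReal.coe_toReal, coe_nnnorm]
  rw [spectrum.mem_iff] at hz
  have hdet : (algebraMap ℂ (Matrix (Fin n) (Fin n) ℂ) z - Mc).det = 0 := by
    by_contra hd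
    exact hz ((Matrix.isUnit_iff_isUnit_det _).mpr (Ne.isUnit hd))
  obtain ⟨v, hvne, hv⟩ := (Matrix.exists_mulVec_eq_zero_iff).mpr hdet
  have hev : Mc *ᵥ v = z • v := by
    have h1 : (z • (1 : Matrix (Fin n) (Fin n) ℂ) - Mc) *ᵥ v = 0 := by
      rwa [Algebra.algebraMap_eq_smul_one] at hv
    rw [Matrix.sub_mulVec, Matrix.smul_mulVec, Matrix.one_mulVec] at h1
    exact (sub_eq_zero.mp h1).symm
  refine ⟨fun i => ‖v i‖, fun i => norm_nonneg _, ?_, ?_⟩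
  · intro h0
    apply hvne
    funext i
    have h2 := congrFun h0 i
    simpa using h2
  · intro i
    rw [hρ]
    calc ‖z‖ * ‖v i‖ = ‖(z • v) i‖ := by
          simp [norm_mul]
      _ = ‖(Mc *ᵥ v) i‖ := by rw [hev]
      _ = ‖∑ j, (Δ i j : ℂ) * v j‖ := by
          simp [Matrix.mulVec, dotProduct, hMc, Matrix.map_apply]
      _ ≤ ∑ j, ‖(Δ i j : ℂ) * v j‖ := norm_sum_le _ _
      _ = ∑ j, Δ i j * ‖v j‖ := by
          refine Finset.sum_congr rfl fun j _ => ?_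
          rw [norm_mul, Complex.norm_real, Real.norm_eq_abs, abs_of_nonneg (hΔ i j)]
      _ = (Δ *ᵥ fun j => ‖v j‖) i := rfl

lemma specRad_zero_dim (Δ : Matrix (Fin 0) (Fin 0) ℝ) : specRad Δ = 0 := by
  simp [specRad]

lemma mulVec_pos {n : ℕ} {P : Matrix (Fin n) (Fin n) ℝ} (hP : ∀ i j, 0 < P i j)
    {x : Fin n → ℝ} (hx : ∀ i, 0 ≤ x i) {j0 : Fin n} (hj0 : 0 < x j0) :
    ∀ i, 0 < (P *ᵥ x) i := by
  intro i
  have h : (P *ᵥ x) i = ∑ j, P i j * x j := rfl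
  rw [h]
  exact Finset.sum_pos' (fun j _ => mul_nonneg (hP i j).le (hx j))
    ⟨j0, Finset.mem_univ _, mul_pos (hP i j0) hj0⟩

lemma onePlus_pow_comm {n m : ℕ} (Δ : Matrix (Fin n) (Fin n) ℝ) (v : Fin n → ℝ) :
    Δ *ᵥ ((1 + Δ) ^ m *ᵥ v) = (1 + Δ) ^ m *ᵥ (Δ *ᵥ v) := by
  rw [Matrix.mulVec_mulVec, Matrix.mulVec_mulVec,
    (((Commute.one_right Δ).add_right (Commute.refl Δ)).pow_right m).eq]

end CSAux



theorem stmt_15 {n : ℕ} (Al Au : Matrix (Fin n) (Fin n) ℝ)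
    (hle : ∀ i j, Al i j ≤ Au i j)
    (Ac : Matrix (Fin n) (Fin n) ℝ) (hAc : Ac = (1/2 : ℝ) • (Al + Au)) (Δ : Matrix (Fin n) (Fin n) ℝ) (hΔ : Δ = (1/2 : ℝ) • (Au - Al))
    (hI : Ac = (1 : Matrix (Fin n) (Fin n) ℝ)) (hirr : IrreducibleMat Δ) :
    (∀ A : Matrix (Fin n) (Fin n) ℝ, memInterval Al Au A → ColumnSufficient A) ↔ specRad Δ ≤ 1 := by
  classical
  have hΔnn : ∀ i j, 0 ≤ Δ i j := by
    intro i j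
    rw [hΔ]
    simp only [Matrix.smul_apply, Matrix.sub_apply, smul_eq_mul]
    linarith [hle i j]
  have hAl : ∀ i j, Al i j = (1 : Matrix (Fin n) (Fin n) ℝ) i j - Δ i j := by
    intro i j
    have e1 : (1 : Matrix (Fin n) (Fin n) ℝ) i j = (1/2 : ℝ) * (Al i j + Au i j) := by
      rw [← hI, hAc]; simp
    have e2 : Δ i j = (1/2 : ℝ) * (Au i j - Al i j) := by
      rw [hΔ]; simp
    linarith
  have hAu : ∀ i j, Au i j = (1 : Matrix (Fin n) (Fin n) ℝ) i j + Δ i j := by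
    intro i j
    have e1 : (1 : Matrix (Fin n) (Fin n) ℝ) i j = (1/2 : ℝ) * (Al i j + Au i j) := by
      rw [← hI, hAc]; simp
    have e2 : Δ i j = (1/2 : ℝ) * (Au i j - Al i j) := by
      rw [hΔ]; simp
    linarith
  constructor
  · -- strong column sufficiency implies ρ(Δ) ≤ 1
    intro h
    by_contra hgt
    push_neg at hgt
    have hn : 0 < n := by
      rcases Nat.eq_zero_or_pos n with h0 | h0
      · subst h0
        have := CSAux.specRad_zero_dim Δ
        linarith
      · exact h0
    haveI : Nonempty (Fin n) := ⟨⟨0, hn⟩⟩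
    obtain ⟨x, hx0, hxne, hxev⟩ := CSAux.exists_perron hn Δ hΔnn
    have hj0 : ∃ j0, 0 < x j0 := by
      by_contra hcon
      push_neg at hcon
      exact hxne (funext fun i => le_antisymm (hcon i) (hx0 i))
    obtain ⟨j0, hj0⟩ := hj0
    have hPpos : ∀ i j, 0 < ((1 + Δ) ^ (n-1)) i j := hirr
    set y := ((1 + Δ) ^ (n-1)) *ᵥ x with hy
    have hypos : ∀ i, 0 < y i := CSAux.mulVec_pos hPpos hx0 hj0
    have hPnn : ∀ i j, 0 ≤ ((1 + Δ) ^ (n-1)) i j := fun i j => (hPpos i j).le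
    have hyev : ∀ i, specRad Δ * y i ≤ (Δ *ᵥ y) i := by
      intro i
      rw [hy, CSAux.onePlus_pow_comm]
      calc specRad Δ * (((1 + Δ) ^ (n-1)) *ᵥ x) i
          = (((1 + Δ) ^ (n-1)) *ᵥ fun j => specRad Δ * x j) i := by
            simp only [Matrix.mulVec, dotProduct, Finset.mul_sum]
            exact Finset.sum_congr rfl fun j _ => by ring
        _ ≤ (((1 + Δ) ^ (n-1)) *ᵥ (Δ *ᵥ x)) i := CSAux.mulVec_le_mulVec hPnn hxev i
    have hmem : memInterval Al Au Al := fun i j => ⟨le_rfl, hle i j⟩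
    have hAlM : Al = 1 - Δ := by
      funext i j
      rw [hAl i j]; simp
    have hAly : ∀ i, (Al *ᵥ y) i = y i - (Δ *ᵥ y) i := by
      intro i
      rw [hAlM, Matrix.sub_mulVec, Matrix.one_mulVec]
      simp
    have hneg : ∀ i, (Al *ᵥ y) i < 0 := by
      intro i
      rw [hAly i]
      have h1 := hyev i
      nlinarith [hypos i]
    haveI : IsEmpty (↥(∅ : Finset (Fin n))) := ⟨fun j => Finset.notMem_empty _ j.2⟩
    have hcs := h Al hmem Finset.univ ∅ (Finset.disjoint_empty_right _)
      (by simpa using Finset.univ_nonempty)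
    apply hcs
    set x' : (↥(Finset.univ : Finset (Fin n)) ⊕ ↥(∅ : Finset (Fin n))) → ℝ :=
      Sum.elim (fun i => y ↑i) (fun _ => 0) with hx'
    have hval : ∀ i : ↥(Finset.univ : Finset (Fin n)),
        (csBlock Al Finset.univ ∅).mulVec x' (Sum.inl i) = (Al *ᵥ y) ↑i := by
      intro i
      show (∑ l : ↥(Finset.univ : Finset (Fin n)) ⊕ ↥(∅ : Finset (Fin n)),
        csBlock Al Finset.univ ∅ (Sum.inl i) l * x' l) = _
      rw [Fintype.sum_sum_type]
      have h2 : ∑ l : ↥(∅ : Finset (Fin n)),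
          csBlock Al Finset.univ ∅ (Sum.inl i) (Sum.inr l) * x' (Sum.inr l) = 0 := by
        simp
      rw [h2, add_zero]
      have h3 : ∀ l : ↥(Finset.univ : Finset (Fin n)),
          csBlock Al Finset.univ ∅ (Sum.inl i) (Sum.inl l) * x' (Sum.inl l)
            = Al ↑i ↑l * y ↑l := by
        intro l
        simp [csBlock, hx']
      rw [Finset.sum_congr rfl fun l _ => h3 l]
      rw [Finset.sum_coe_sort Finset.univ (fun j => Al ↑i j * y j)]
      rfl
    refine ⟨x', ?_, ?_, ?_⟩
    · rintro (i | j)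
      · rw [hval i]
        exact (hneg ↑i).le
      · exact absurd j.2 (Finset.notMem_empty _)
    · intro h0
      have h1 := congrFun h0 (Sum.inl ⟨⟨0, hn⟩, Finset.mem_univ _⟩)
      rw [hval] at h1
      exact absurd h1 (hneg _).ne
    · rintro (i | j)
      · exact hypos ↑i
      · exact absurd j.2 (Finset.notMem_empty _)
  · -- ρ(Δ) ≤ 1 implies strong column sufficiency
    intro hρ A hA Iset Jset hdisj hne
    rintro ⟨x, hx1, hx2, hx3⟩
    set B := csBlock A Iset Jset with hB
    set emb : ↥Iset ⊕ ↥Jset → Fin n := Sum.elim (fun i => ↑i) (fun j => ↑j) with hemb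
    have hembinj : Function.Injective emb := by
      rintro (a | a) (b | b) h <;>
        simp only [hemb, Sum.elim_inl, Sum.elim_inr] at h
      · exact congrArg Sum.inl (Subtype.ext h)
      · exact absurd (h ▸ a.2) (fun hmem => Finset.disjoint_left.mp hdisj hmem b.2)
      · exact absurd (h ▸ a.2) (fun hmem => Finset.disjoint_left.mp hdisj b.2 hmem)
      · exact congrArg Sum.inr (Subtype.ext h)
    have hAbound : ∀ i j, |A i j - (1 : Matrix (Fin n) (Fin n) ℝ) i j| ≤ Δ i j := by
      intro i j
      rw [abs_le]
      constructor
      · linarith [(hA i j).1, hAl i j]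
      · linarith [(hA i j).2, hAu i j]
    have hkey : ∀ k l, |B k l - (1 : Matrix (↥Iset ⊕ ↥Jset) (↥Iset ⊕ ↥Jset) ℝ) k l|
        ≤ Δ (emb k) (emb l) := by
      rintro (a | a) (b | b) <;>
        simp only [hB, csBlock, hemb, Sum.elim_inl, Sum.elim_inr,
          Matrix.fromBlocks_apply₁₁, Matrix.fromBlocks_apply₁₂, Matrix.fromBlocks_apply₂₁,
          Matrix.fromBlocks_apply₂₂, Matrix.submatrix_apply, Matrix.neg_apply]
      · by_cases hab : a = b
        · subst hab
          simpa [Matrix.one_apply] using hAbound ↑a ↑a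
        · have hne' : (↑a : Fin n) ≠ ↑b := fun hcon => hab (Subtype.ext hcon)
          simpa [Matrix.one_apply, Sum.inl.injEq, hab, hne'] using hAbound ↑a ↑b
      · have hne' : (↑a : Fin n) ≠ ↑b := by
          intro hcon
          exact Finset.disjoint_left.mp hdisj a.2 (hcon ▸ b.2)
        have := hAbound ↑a ↑b
        rw [Matrix.one_apply_ne hne'] at this
        rw [Matrix.one_apply_ne (by simp : (Sum.inl a : ↥Iset ⊕ ↥Jset) ≠ Sum.inr b)]
        rw [sub_zero] at this ⊢
        simpa [abs_neg] using this
      · have hne' : (↑a : Fin n) ≠ ↑b := by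
          intro hcon
          exact Finset.disjoint_left.mp hdisj b.2 (hcon ▸ a.2)
        have := hAbound ↑a ↑b
        rw [Matrix.one_apply_ne hne'] at this
        rw [Matrix.one_apply_ne (by simp : (Sum.inr a : ↥Iset ⊕ ↥Jset) ≠ Sum.inl b)]
        rw [sub_zero] at this ⊢
        simpa [abs_neg] using this
      · by_cases hab : a = b
        · subst hab
          simpa [Matrix.one_apply] using hAbound ↑a ↑a
        · have hne' : (↑a : Fin n) ≠ ↑b := fun hcon => hab (Subtype.ext hcon)
          simpa [Matrix.one_apply, Sum.inr.injEq, hab, hne'] using hAbound ↑a ↑b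
    -- basic sum identity
    have hsum1 : ∀ k, ∑ l, ((1 : Matrix (↥Iset ⊕ ↥Jset) (↥Iset ⊕ ↥Jset) ℝ) k l - B k l) * x l
        = x k - (B *ᵥ x) k := by
      intro k
      have h1 : x k = ∑ l, (1 : Matrix (↥Iset ⊕ ↥Jset) (↥Iset ⊕ ↥Jset) ℝ) k l * x l :=
        (congrFun (Matrix.one_mulVec x) k).symm
      have h2 : (B *ᵥ x) k = ∑ l, B k l * x l := rfl
      rw [h1, h2, ← Finset.sum_sub_distrib]
      exact Finset.sum_congr rfl fun l _ => by ring
    have hmid : ∀ k, ∑ l, ((1 : Matrix (↥Iset ⊕ ↥Jset) (↥Iset ⊕ ↥Jset) ℝ) k l - B k l) * x l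
        ≤ ∑ l, Δ (emb k) (emb l) * x l := by
      intro k
      refine Finset.sum_le_sum fun l _ => ?_
      have h1 := abs_le.mp (hkey k l)
      exact mul_le_mul_of_nonneg_right (by linarith [h1.1]) (hx3 l).le
    have hstep1 : ∀ k, x k ≤ ∑ l, Δ (emb k) (emb l) * x l := by
      intro k
      have h0 : (B *ᵥ x) k ≤ 0 := hx1 k
      have := hmid k
      rw [hsum1 k] at this
      linarith
    -- extend x to a vector on Fin n
    set y : Fin n → ℝ := fun i => ∑ k, if emb k = i then x k else 0 with hydef
    have hyemb : ∀ k, y (emb k) = x k := by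
      intro k
      show (∑ l, if emb l = emb k then x l else 0) = x k
      have h1 : ∀ l, (if emb l = emb k then x l else 0) = if l = k then x l else 0 := by
        intro l
        simp [hembinj.eq_iff]
      rw [Finset.sum_congr rfl fun l _ => h1 l]
      simp
    have hynn : ∀ i, 0 ≤ y i := by
      intro i
      refine Finset.sum_nonneg fun k _ => ?_
      by_cases h : emb k = i <;> simp [h, (hx3 k).le]
    have hDy : ∀ i, (Δ *ᵥ y) i = ∑ k, Δ i (emb k) * x k := by
      intro i
      show (∑ j, Δ i j * ∑ k, if emb k = j then x k else 0) = _
      calc (∑ j, Δ i j * ∑ k, if emb k = j then x k else 0)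
          = ∑ j, ∑ k, Δ i j * (if emb k = j then x k else 0) := by
            exact Finset.sum_congr rfl fun j _ => Finset.mul_sum _ _ _
        _ = ∑ k, ∑ j, Δ i j * (if emb k = j then x k else 0) := Finset.sum_comm
        _ = ∑ k, Δ i (emb k) * x k := by
            refine Finset.sum_congr rfl fun k _ => ?_
            rw [Finset.sum_eq_single (emb k)]
            · simp
            · intro j _ hj
              simp [Ne.symm hj]
            · intro hmem
              exact absurd (Finset.mem_univ _) hmem
    have hy : ∀ i, y i ≤ (Δ *ᵥ y) i := by
      intro i
      by_cases hmem : ∃ k, emb k = i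
      · obtain ⟨k, rfl⟩ := hmem
        rw [hyemb k, hDy]
        exact hstep1 k
      · have h0 : y i = 0 := by
          refine Finset.sum_eq_zero fun k _ => ?_
          rw [if_neg (fun hcon => hmem ⟨k, hcon⟩)]
        rw [h0, hDy]
        exact Finset.sum_nonneg fun k _ => mul_nonneg (hΔnn _ _) (hx3 k).le
    -- some index in the union
    obtain ⟨a, ha⟩ := hne
    have hk1 : ∃ k1 : ↥Iset ⊕ ↥Jset, True := by
      rcases Finset.mem_union.mp ha with h | h
      · exact ⟨Sum.inl ⟨a, h⟩, trivial⟩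
      · exact ⟨Sum.inr ⟨a, h⟩, trivial⟩
    obtain ⟨k1, -⟩ := hk1
    have hn : 0 < n := (emb k1).pos
    haveI : Nonempty (Fin n) := ⟨⟨0, hn⟩⟩
    have hPpos : ∀ i j, 0 < ((1 + Δ) ^ (n-1)) i j := hirr
    -- equality case
    have heq : Δ *ᵥ y = y := by
      by_contra hne'
      set z : Fin n → ℝ := fun i => (Δ *ᵥ y) i - y i with hz
      have hznn : ∀ i, 0 ≤ z i := fun i => sub_nonneg.mpr (hy i)
      have hzne : ∃ i0, 0 < z i0 := by
        by_contra hc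
        push_neg at hc
        apply hne'
        funext i
        have h1 := le_antisymm (hc i) (hznn i)
        have h2 : (Δ *ᵥ y) i - y i = 0 := by
          have h3 : z i = (Δ *ᵥ y) i - y i := rfl
          linarith
        linarith
      obtain ⟨i0z, hi0z⟩ := hzne
      have hwpos : ∀ i, 0 < (((1 + Δ) ^ (n-1)) *ᵥ y) i :=
        CSAux.mulVec_pos hPpos hynn (j0 := emb k1) (by rw [hyemb k1]; exact hx3 k1)
      have hPz : ∀ i, 0 < (((1 + Δ) ^ (n-1)) *ᵥ z) i :=
        CSAux.mulVec_pos hPpos hznn hi0z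
      set w := ((1 + Δ) ^ (n-1)) *ᵥ y with hw
      have hΔw : ∀ i, (Δ *ᵥ w) i = w i + (((1 + Δ) ^ (n-1)) *ᵥ z) i := by
        intro i
        rw [hw, CSAux.onePlus_pow_comm]
        have h1 : (Δ *ᵥ y) = fun j => y j + z j := by
          funext j
          simp [hz]
        rw [h1]
        show (∑ j, ((1 + Δ) ^ (n-1)) i j * (y j + z j)) = _
        calc (∑ j, ((1 + Δ) ^ (n-1)) i j * (y j + z j))
            = ∑ j, (((1 + Δ) ^ (n-1)) i j * y j + ((1 + Δ) ^ (n-1)) i j * z j) :=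
              Finset.sum_congr rfl fun j _ => by ring
          _ = (∑ j, ((1 + Δ) ^ (n-1)) i j * y j) + ∑ j, ((1 + Δ) ^ (n-1)) i j * z j :=
              Finset.sum_add_distrib
          _ = _ := rfl
      obtain ⟨iε, -, hiε⟩ := Finset.exists_min_image Finset.univ
        (fun i => (((1 + Δ) ^ (n-1)) *ᵥ z) i) ⟨_, Finset.mem_univ (Classical.arbitrary (Fin n))⟩
      obtain ⟨im, -, him⟩ := Finset.exists_max_image Finset.univ w
        ⟨_, Finset.mem_univ (Classical.arbitrary (Fin n))⟩
      have hε : 0 < (((1 + Δ) ^ (n-1)) *ᵥ z) iε := hPz iε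
      have hm : 0 < w im := hwpos im
      have hc1 : (1:ℝ) < 1 + (((1 + Δ) ^ (n-1)) *ᵥ z) iε / w im := by
        have := div_pos hε hm
        linarith
      have hleρ : 1 + (((1 + Δ) ^ (n-1)) *ᵥ z) iε / w im ≤ specRad Δ := by
        refine CSAux.le_specRad_of_mulVec hn hΔnn hwpos (by positivity) ?_
        intro i
        have h1 : (((1 + Δ) ^ (n-1)) *ᵥ z) iε / w im * w i
            ≤ (((1 + Δ) ^ (n-1)) *ᵥ z) iε := by
          rw [div_mul_eq_mul_div, div_le_iff₀ hm]
          have h2 := him i (Finset.mem_univ i)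
          nlinarith
        have h3 := hiε i (Finset.mem_univ i)
        rw [hΔw i]
        nlinarith
      linarith
    -- conclusion: B *ᵥ x = 0, contradiction
    apply hx2
    funext k
    have e1 : ∑ l, Δ (emb k) (emb l) * x l = x k := by
      have h1 := hDy (emb k)
      rw [heq, hyemb k] at h1
      exact h1.symm
    have e2 := hmid k
    rw [hsum1 k, e1] at e2
    have e3 : (B *ᵥ x) k ≤ 0 := hx1 k
    have : (B *ᵥ x) k = 0 := le_antisymm e3 (by linarith)
    simpa using this
end

section
/- Let [A] be an interval matrix with midpoint Ac = (1/2)(A̲+Ā), and suppose Ac is an M-matrix. Then [A] is strongly an R0-matrix if and only if every A ∈ [A] is an H-matrix. Moreover, if Ac = I (the identity matrix) with radius Δ = (1/2)(Ā−A̲), then [A] is strongly an R0-matrix if and only if ρ(Δ) < 1. -/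
open Filter

attribute [local instance] Matrix.linftyOpNormedRing Matrix.linftyOpNormedAlgebra
  Matrix.linftyOpNormedSpace


open Matrix

namespace PF
variable {n : ℕ}

local instance : CompleteSpace (Matrix (Fin n) (Fin n) ℂ) :=
  inferInstanceAs (CompleteSpace (Fin n → Fin n → ℂ))

theorem norm_def (A : Matrix (Fin n) (Fin n) ℝ) :
    ‖A‖ = ((Finset.univ : Finset (Fin n)).sup fun i => ∑ j, ‖A i j‖₊ : NNReal) :=
  Matrix.linfty_opNorm_def A

theorem rowsum_le_norm (A : Matrix (Fin n) (Fin n) ℝ) (i : Fin n) :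
    ∑ j, |A i j| ≤ ‖A‖ := by
  rw [norm_def]
  have : (∑ j, ‖A i j‖₊ : NNReal) ≤ (Finset.univ.sup fun i => ∑ j, ‖A i j‖₊) :=
    Finset.le_sup (f := fun i => ∑ j, ‖A i j‖₊) (Finset.mem_univ i)
  calc ∑ j, |A i j| = ((∑ j, ‖A i j‖₊ : NNReal) : ℝ) := by
        push_cast [← Real.norm_eq_abs, coe_nnnorm]; ring
    _ ≤ _ := by exact_mod_cast this

theorem norm_le_of_rowsum {A : Matrix (Fin n) (Fin n) ℝ} {c : ℝ} (hc : 0 ≤ c)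
    (h : ∀ i, ∑ j, |A i j| ≤ c) : ‖A‖ ≤ c := by
  rw [norm_def]
  have : ∀ i ∈ Finset.univ, ((∑ j, ‖A i j‖₊ : NNReal) : ℝ) ≤ c := by
    intro i _
    calc ((∑ j, ‖A i j‖₊ : NNReal) : ℝ) = ∑ j, |A i j| := by
          push_cast [← Real.norm_eq_abs, coe_nnnorm]; ring
      _ ≤ c := h i
  have h2 : (Finset.univ.sup fun i => ∑ j, ‖A i j‖₊) ≤ (⟨c, hc⟩ : NNReal) :=
    Finset.sup_le fun i hi => by
      have := this i hi
      exact_mod_cast this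
  exact_mod_cast h2

theorem norm_map (A : Matrix (Fin n) (Fin n) ℝ) :
    ‖A.map (algebraMap ℝ ℂ)‖ = ‖A‖ := by
  rw [Matrix.linfty_opNorm_def, Matrix.linfty_opNorm_def]
  congr 1
  apply Finset.sup_congr rfl
  intro i _
  congr 1
  ext j
  simp [Matrix.map_apply]

theorem map_pow' (A : Matrix (Fin n) (Fin n) ℝ) (k : ℕ) :
    (A ^ k).map (algebraMap ℝ ℂ) = (A.map (algebraMap ℝ ℂ)) ^ k := by
  simpa using map_pow ((algebraMap ℝ ℂ).mapMatrix) A k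


theorem specRad_nonneg (A : Matrix (Fin n) (Fin n) ℝ) : 0 ≤ specRad A :=
  ENNReal.toReal_nonneg

theorem specRad_subsingleton (hn : n = 0) (A : Matrix (Fin n) (Fin n) ℝ) : specRad A = 0 := by
  subst hn
  haveI : Subsingleton (Matrix (Fin 0) (Fin 0) ℂ) := ⟨fun a b => by ext i; exact i.elim0⟩
  rw [specRad, spectrum.SpectralRadius.of_subsingleton, ENNReal.toReal_zero]

theorem specRad_ne_top [Nonempty (Fin n)] (A : Matrix (Fin n) (Fin n) ℝ) :
    spectralRadius ℂ (A.map (algebraMap ℝ ℂ)) ≠ ⊤ :=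
  ((spectrum.spectralRadius_le_nnnorm (𝕜 := ℂ) _).trans_lt ENNReal.coe_lt_top).ne

theorem specRad_pow_le [Nonempty (Fin n)] (A : Matrix (Fin n) (Fin n) ℝ) (k : ℕ) :
    specRad A ^ (k + 1) ≤ ‖A ^ (k + 1)‖ := by
  set a := A.map (algebraMap ℝ ℂ) with ha
  have h := spectrum.spectralRadius_le_pow_nnnorm_pow_one_div ℂ a k
  rw [nnnorm_one, ENNReal.coe_one, ENNReal.one_rpow, mul_one] at h
  -- convert to real
  have hk : (0:ℝ) < k + 1 := by positivity
  have h2 : specRad A ≤ ‖a ^ (k+1)‖ ^ (1/(k+1:ℝ)) := by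
    rw [specRad]
    calc (spectralRadius ℂ a).toReal
        ≤ ((‖a ^ (k + 1)‖₊ : ENNReal) ^ (1 / (k + 1 : ℕ) : ℝ)).toReal := by
          apply ENNReal.toReal_mono _ (by exact_mod_cast h)
          exact (ENNReal.rpow_ne_top_of_nonneg (by positivity) ENNReal.coe_ne_top)
      _ = ‖a ^ (k+1)‖ ^ (1/(k+1:ℝ)) := by
          rw [← ENNReal.toReal_rpow]
          push_cast
          simp [coe_nnnorm]
  have h3 : specRad A ^ (k+1) ≤ (‖a ^ (k+1)‖ ^ (1/(k+1:ℝ))) ^ (k+1) :=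
    pow_le_pow_left₀ (specRad_nonneg A) h2 _
  calc specRad A ^ (k+1) ≤ (‖a ^ (k+1)‖ ^ (1/(k+1:ℝ))) ^ (k+1) := h3
    _ = ‖a ^ (k+1)‖ := by
        rw [← Real.rpow_natCast (‖a ^ (k+1)‖ ^ (1/(k+1:ℝ))) (k+1), ← Real.rpow_mul (norm_nonneg _)]
        push_cast
        rw [one_div, inv_mul_cancel₀ (by positivity), Real.rpow_one]
    _ = ‖A ^ (k+1)‖ := by rw [← map_pow', norm_map]

theorem eventually_norm_pow_lt [Nonempty (Fin n)] (A : Matrix (Fin n) (Fin n) ℝ) {r : ℝ}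
    (h : specRad A < r) : ∀ᶠ k : ℕ in atTop, ‖A ^ k‖ < r ^ k := by
  have hr0 : 0 < r := (specRad_nonneg A).trans_lt h
  set a := A.map (algebraMap ℝ ℂ) with ha
  have htop := specRad_ne_top A
  have hlt : spectralRadius ℂ a < ENNReal.ofReal r := by
    rw [← ENNReal.ofReal_toReal htop]
    exact ENNReal.ofReal_lt_ofReal_iff hr0 |>.mpr h
  have hev : ∀ᶠ k : ℕ in atTop, (‖a ^ k‖₊ : ENNReal) ^ (1/(k:ℝ)) < ENNReal.ofReal r :=
    (spectrum.pow_nnnorm_pow_one_div_tendsto_nhds_spectralRadius a).eventually_lt_const hlt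
  filter_upwards [hev, Filter.eventually_ge_atTop 1] with k hk hk1
  have hkpos : (0:ℝ) < k := by exact_mod_cast hk1
  have h2 : ((‖a ^ k‖₊ : ENNReal) ^ (1/(k:ℝ))) ^ (k:ℝ) < (ENNReal.ofReal r) ^ (k:ℝ) :=
    ENNReal.rpow_lt_rpow hk hkpos
  rw [← ENNReal.rpow_mul, one_div, inv_mul_cancel₀ (by positivity), ENNReal.rpow_one] at h2
  have h3 : (‖a ^ k‖₊ : ENNReal) < ENNReal.ofReal (r ^ k) := by
    rwa [ENNReal.ofReal_rpow_of_pos hr0, Real.rpow_natCast] at h2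
  have h4 : ‖a ^ k‖ < r ^ k := by
    have := ENNReal.toReal_strict_mono (by simp [ENNReal.ofReal_ne_top]) h3
    rwa [ENNReal.coe_toReal, coe_nnnorm, ENNReal.toReal_ofReal (by positivity)] at this
  rwa [← map_pow', norm_map] at h4

/-- From eventual geometric norm bound, a uniform geometric bound. -/
theorem exists_norm_pow_le [Nonempty (Fin n)] (A : Matrix (Fin n) (Fin n) ℝ) {r : ℝ}
    (h : specRad A < r) : ∃ M : ℝ, 0 < M ∧ ∀ k, ‖A ^ k‖ ≤ M * r ^ k := by
  have hr0 : 0 < r := (specRad_nonneg A).trans_lt h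
  obtain ⟨K, hK⟩ := (eventually_norm_pow_lt A h).exists_forall_of_atTop
  have hne : (Finset.range (K+1)).Nonempty := Finset.nonempty_range_add_one
  set M0 : ℝ := (Finset.range (K+1)).sup' hne fun k => ‖A ^ k‖ / r ^ k with hM0
  refine ⟨max 1 M0, lt_of_lt_of_le one_pos (le_max_left _ _), fun k => ?_⟩
  rcases le_or_gt K k with hk | hk
  · have := hK k hk
    nlinarith [pow_pos hr0 k, this, le_max_left 1 M0, pow_nonneg hr0.le k]
  · have hmem : k ∈ Finset.range (K+1) := Finset.mem_range.mpr (by omega)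
    have h1 : ‖A ^ k‖ / r ^ k ≤ M0 := Finset.le_sup' (f := fun k => ‖A ^ k‖ / r ^ k) hmem
    have h2 : M0 ≤ max 1 M0 := le_max_right _ _
    have hrk : (0:ℝ) < r ^ k := pow_pos hr0 k
    calc ‖A ^ k‖ = (‖A ^ k‖ / r ^ k) * r ^ k := by field_simp
      _ ≤ max 1 M0 * r ^ k := by nlinarith

theorem mulVec_nonneg {Q : Matrix (Fin n) (Fin n) ℝ} {v : Fin n → ℝ}
    (hQ : ∀ i j, 0 ≤ Q i j) (hv : ∀ i, 0 ≤ v i) : ∀ i, 0 ≤ Q.mulVec v i := fun i => by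
  rw [Matrix.mulVec, dotProduct]
  exact Finset.sum_nonneg fun j _ => mul_nonneg (hQ i j) (hv j)

theorem mulVec_mono {Q : Matrix (Fin n) (Fin n) ℝ} {u v : Fin n → ℝ}
    (hQ : ∀ i j, 0 ≤ Q i j) (huv : ∀ i, u i ≤ v i) : ∀ i, Q.mulVec u i ≤ Q.mulVec v i := fun i => by
  rw [Matrix.mulVec, Matrix.mulVec, dotProduct, dotProduct]
  exact Finset.sum_le_sum fun j _ => mul_le_mul_of_nonneg_left (huv j) (hQ i j)

theorem mul_entry_nonneg {A B : Matrix (Fin n) (Fin n) ℝ}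
    (hA : ∀ i j, 0 ≤ A i j) (hB : ∀ i j, 0 ≤ B i j) : ∀ i j, 0 ≤ (A * B) i j := fun i j => by
  rw [Matrix.mul_apply]; exact Finset.sum_nonneg fun k _ => mul_nonneg (hA i k) (hB k j)

theorem mul_entry_mono {A A' B B' : Matrix (Fin n) (Fin n) ℝ}
    (hA : ∀ i j, 0 ≤ A i j) (hB : ∀ i j, 0 ≤ B i j)
    (hAA : ∀ i j, A i j ≤ A' i j) (hBB : ∀ i j, B i j ≤ B' i j) :
    ∀ i j, (A * B) i j ≤ (A' * B') i j := fun i j => by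
  rw [Matrix.mul_apply, Matrix.mul_apply]
  refine Finset.sum_le_sum fun k _ => mul_le_mul (hAA i k) (hBB k j) (hB k j) ?_
  exact le_trans (hA i k) (hAA i k)

theorem pow_entry_nonneg {A : Matrix (Fin n) (Fin n) ℝ} (hA : ∀ i j, 0 ≤ A i j) (k : ℕ) :
    ∀ i j, 0 ≤ (A ^ k) i j := by
  induction k with
  | zero => intro i j; by_cases h : i = j <;> simp [h, Matrix.one_apply]
  | succ k ih => rw [pow_succ]; exact mul_entry_nonneg ih hA

theorem pow_entry_mono {A B : Matrix (Fin n) (Fin n) ℝ} (hA : ∀ i j, 0 ≤ A i j)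
    (hAB : ∀ i j, A i j ≤ B i j) (k : ℕ) : ∀ i j, (A ^ k) i j ≤ (B ^ k) i j := by
  induction k with
  | zero => intro i j; simp
  | succ k ih =>
    rw [pow_succ, pow_succ]
    exact mul_entry_mono (pow_entry_nonneg hA k) hA ih hAB

theorem norm_le_norm_entry {A B : Matrix (Fin n) (Fin n) ℝ}
    (h : ∀ i j, |A i j| ≤ B i j) : ‖A‖ ≤ ‖B‖ := by
  have hB : ∀ i j, 0 ≤ B i j := fun i j => le_trans (abs_nonneg _) (h i j)
  refine norm_le_of_rowsum (norm_nonneg _) fun i => ?_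
  calc ∑ j, |A i j| ≤ ∑ j, B i j := Finset.sum_le_sum fun j _ => h i j
    _ = ∑ j, |B i j| := by
        refine Finset.sum_congr rfl fun j _ => ?_
        rw [abs_of_nonneg (hB i j)]
    _ ≤ ‖B‖ := rowsum_le_norm B i

/-- ratio trick -/
theorem le_of_pow_le_mul_pow {a r M : ℝ} (ha : 0 ≤ a) (hr : 0 ≤ r)
    (h : ∀ k, 1 ≤ k → a ^ k ≤ M * r ^ k) : a ≤ r := by
  by_contra hc
  push_neg at hc
  rcases eq_or_lt_of_le hr with hr0 | hr0
  · have h1 := h 1 le_rfl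
    rw [← hr0] at h1; simp at h1; linarith
  · have h1 : 1 < a / r := (one_lt_div hr0).mpr hc
    obtain ⟨k, hk⟩ := pow_unbounded_of_one_lt M h1
    set k' := max k 1 with hk'
    have hkk : (a / r) ^ k ≤ (a / r) ^ k' := pow_le_pow_right₀ h1.le (le_max_left _ _)
    have h2 := h k' (le_max_right _ _)
    have h3 : M < (a / r) ^ k' := lt_of_lt_of_le hk hkk
    rw [div_pow] at h3
    have h4 : M * r ^ k' < a ^ k' := by
      rw [lt_div_iff₀ (pow_pos hr0 k')] at h3; linarith
    linarith

theorem specRad_le_of_pow_bound [Nonempty (Fin n)] {A : Matrix (Fin n) (Fin n) ℝ} {M r : ℝ}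
    (hr : 0 ≤ r) (h : ∀ k, 1 ≤ k → ‖A ^ k‖ ≤ M * r ^ k) : specRad A ≤ r := by
  refine le_of_pow_le_mul_pow (M := M) (specRad_nonneg A) hr fun k hk => ?_
  obtain ⟨k', rfl⟩ : ∃ k', k = k' + 1 := ⟨k - 1, by omega⟩
  exact le_trans (specRad_pow_le A k') (h _ hk)

theorem specRad_mono {A B : Matrix (Fin n) (Fin n) ℝ} (hA : ∀ i j, 0 ≤ A i j)
    (hAB : ∀ i j, A i j ≤ B i j) : specRad A ≤ specRad B := by
  rcases Nat.eq_zero_or_pos n with hn | hn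
  · rw [specRad_subsingleton hn, specRad_subsingleton hn]
  haveI : Nonempty (Fin n) := ⟨⟨0, hn⟩⟩
  refine le_of_forall_pos_le_add fun ε hε => ?_
  obtain ⟨M, hM, hbd⟩ := exists_norm_pow_le B (lt_add_of_pos_right _ hε)
  refine specRad_le_of_pow_bound (M := M) (by have := specRad_nonneg B; linarith) fun k hk => ?_
  refine le_trans ?_ (hbd k)
  refine norm_le_norm_entry fun i j => ?_
  rw [abs_of_nonneg (pow_entry_nonneg hA k i j)]
  exact pow_entry_mono hA hAB k i j

theorem specRad_zero : specRad (0 : Matrix (Fin n) (Fin n) ℝ) = 0 := by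
  rcases Nat.eq_zero_or_pos n with hn | hn
  · exact specRad_subsingleton hn 0
  haveI : Nonempty (Fin n) := ⟨⟨0, hn⟩⟩
  have h := specRad_pow_le (0 : Matrix (Fin n) (Fin n) ℝ) 0
  simp only [zero_add, pow_one, norm_zero] at h
  have := specRad_nonneg (0 : Matrix (Fin n) (Fin n) ℝ)
  linarith

theorem specRad_smul_le {A : Matrix (Fin n) (Fin n) ℝ} {c : ℝ} (hc : 0 ≤ c) :
    specRad (c • A) ≤ c * specRad A := by
  rcases Nat.eq_zero_or_pos n with hn | hn
  · rw [specRad_subsingleton hn, specRad_subsingleton hn, mul_zero]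
  haveI : Nonempty (Fin n) := ⟨⟨0, hn⟩⟩
  rcases eq_or_lt_of_le hc with hc0 | hc0
  · rw [← hc0, zero_smul, zero_mul, specRad_zero]
  refine le_of_forall_pos_le_add fun δ hδ => ?_
  obtain ⟨M, hM, hbd⟩ := exists_norm_pow_le A (lt_add_of_pos_right (specRad A) (div_pos hδ hc0))
  refine specRad_le_of_pow_bound (M := M)
    (by have := specRad_nonneg A; nlinarith) fun k hk => ?_
  have h1 : (c • A) ^ k = c ^ k • A ^ k := smul_pow c A k
  rw [h1, norm_smul, Real.norm_eq_abs, abs_of_nonneg (by positivity)]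
  calc c ^ k * ‖A ^ k‖ ≤ c ^ k * (M * (specRad A + δ / c) ^ k) :=
        mul_le_mul_of_nonneg_left (hbd k) (by positivity)
    _ = M * (c * (specRad A + δ / c)) ^ k := by rw [mul_pow]; ring
    _ = M * (c * specRad A + δ) ^ k := by rw [mul_add, mul_div_cancel₀ _ hc0.ne']

theorem pow_mulVec_le {Q : Matrix (Fin n) (Fin n) ℝ} {w : Fin n → ℝ} {c : ℝ}
    (hQ : ∀ i j, 0 ≤ Q i j) (hc : 0 ≤ c) (hw : ∀ i, 0 ≤ w i)
    (h : ∀ i, Q.mulVec w i ≤ c * w i) (k : ℕ) :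
    ∀ i, (Q ^ k).mulVec w i ≤ c ^ k * w i := by
  induction k with
  | zero => intro i; simp [Matrix.one_mulVec]
  | succ k ih =>
    intro i
    have h1 : (Q ^ (k+1)).mulVec w = Q.mulVec ((Q ^ k).mulVec w) := by
      rw [Matrix.mulVec_mulVec, ← pow_succ']
    rw [h1]
    calc Q.mulVec ((Q ^ k).mulVec w) i ≤ Q.mulVec (fun j => c ^ k * w j) i :=
          mulVec_mono hQ ih i
      _ = c ^ k * Q.mulVec w i := by
          rw [Matrix.mulVec, Matrix.mulVec, dotProduct, dotProduct,
            Finset.mul_sum]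
          exact Finset.sum_congr rfl fun j _ => by ring
      _ ≤ c ^ k * (c * w i) := mul_le_mul_of_nonneg_left (h i) (by positivity)
      _ = c ^ (k+1) * w i := by ring

theorem specRad_le_of_mulVec_le [Nonempty (Fin n)] {Q : Matrix (Fin n) (Fin n) ℝ}
    {w : Fin n → ℝ} {c : ℝ} (hQ : ∀ i j, 0 ≤ Q i j) (hw : ∀ i, 0 < w i)
    (h : ∀ i, Q.mulVec w i ≤ c * w i) : specRad Q ≤ c := by
  have hc : 0 ≤ c := by
    obtain ⟨i⟩ := (inferInstance : Nonempty (Fin n))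
    have h1 : 0 ≤ Q.mulVec w i := mulVec_nonneg hQ (fun i => (hw i).le) i
    nlinarith [h i, hw i]
  set wmin := Finset.univ.inf' Finset.univ_nonempty w with hwmin
  set wmax := Finset.univ.sup' Finset.univ_nonempty w with hwmax
  have hmin : 0 < wmin := by
    rw [hwmin, Finset.lt_inf'_iff]
    exact fun i _ => hw i
  have hminle : ∀ i, wmin ≤ w i := fun i => Finset.inf'_le _ (Finset.mem_univ i)
  have hmaxle : ∀ i, w i ≤ wmax := fun i => Finset.le_sup' _ (Finset.mem_univ i)
  refine specRad_le_of_pow_bound (M := wmax / wmin) hc fun k hk => ?_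
  refine norm_le_of_rowsum ?_ fun i => ?_
  · obtain ⟨i⟩ := (inferInstance : Nonempty (Fin n))
    have hwm : 0 < wmax := lt_of_lt_of_le (hw i) (hmaxle i)
    positivity
  have hrow : ∀ i, (∑ j, (Q ^ k) i j) * wmin ≤ c ^ k * wmax := by
    intro i
    have h2 : (Q ^ k).mulVec w i ≤ c ^ k * w i := pow_mulVec_le hQ hc (fun i => (hw i).le) h k i
    have h3 : (∑ j, (Q ^ k) i j) * wmin ≤ (Q ^ k).mulVec w i := by
      rw [Matrix.mulVec, dotProduct, Finset.sum_mul]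
      exact Finset.sum_le_sum fun j _ =>
        mul_le_mul_of_nonneg_left (hminle j) (pow_entry_nonneg hQ k i j)
    have h4 : c ^ k * w i ≤ c ^ k * wmax := mul_le_mul_of_nonneg_left (hmaxle i) (by positivity)
    linarith
  calc ∑ j, |(Q ^ k) i j| = ∑ j, (Q ^ k) i j := by
        exact Finset.sum_congr rfl fun j _ => abs_of_nonneg (pow_entry_nonneg hQ k i j)
    _ ≤ c ^ k * wmax / wmin := by
        rw [le_div_iff₀ hmin]; exact hrow i
    _ = wmax / wmin * c ^ k := by ring

theorem one_le_specRad_of_le_mulVec {Q : Matrix (Fin n) (Fin n) ℝ} {x : Fin n → ℝ}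
    (hQ : ∀ i j, 0 ≤ Q i j) (hx : ∀ i, 0 ≤ x i) (hx0 : ∃ i, 0 < x i)
    (h : ∀ i, x i ≤ Q.mulVec x i) : 1 ≤ specRad Q := by
  obtain ⟨i0, hi0⟩ := hx0
  haveI : Nonempty (Fin n) := ⟨i0⟩
  by_contra hc
  push_neg at hc
  set r := (specRad Q + 1) / 2 with hr
  have hr1 : r < 1 := by rw [hr]; linarith
  have hr0 : 0 ≤ r := by have := specRad_nonneg Q; rw [hr]; linarith
  have hrs : specRad Q < r := by rw [hr]; linarith
  -- x ≤ Q^k x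
  have hiter : ∀ k i, x i ≤ (Q ^ k).mulVec x i := by
    intro k
    induction k with
    | zero => intro i; simp [Matrix.one_mulVec]
    | succ k ih =>
      intro i
      have h1 : (Q ^ (k+1)).mulVec x = Q.mulVec ((Q ^ k).mulVec x) := by
        rw [Matrix.mulVec_mulVec, ← pow_succ']
      rw [h1]
      calc x i ≤ Q.mulVec x i := h i
        _ ≤ Q.mulVec ((Q ^ k).mulVec x) i := mulVec_mono hQ ih i
  set X := Finset.univ.sup' Finset.univ_nonempty x with hX
  have hXpos : 0 < X := lt_of_lt_of_le hi0 (Finset.le_sup' _ (Finset.mem_univ i0))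
  have hbound : ∀ k, x i0 ≤ ‖Q ^ k‖ * X := by
    intro k
    calc x i0 ≤ (Q ^ k).mulVec x i0 := hiter k i0
      _ = ∑ j, (Q ^ k) i0 j * x j := by rw [Matrix.mulVec, dotProduct]
      _ ≤ ∑ j, (Q ^ k) i0 j * X := Finset.sum_le_sum fun j _ =>
          mul_le_mul_of_nonneg_left (Finset.le_sup' _ (Finset.mem_univ j))
            (pow_entry_nonneg hQ k i0 j)
      _ = (∑ j, (Q ^ k) i0 j) * X := by rw [Finset.sum_mul]
      _ ≤ ‖Q ^ k‖ * X := by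
          refine mul_le_mul_of_nonneg_right ?_ hXpos.le
          refine le_trans (le_of_eq ?_) (rowsum_le_norm (Q ^ k) i0)
          exact Finset.sum_congr rfl fun j _ => (abs_of_nonneg (pow_entry_nonneg hQ k i0 j)).symm
  have hev1 := eventually_norm_pow_lt Q hrs
  have hev2 : ∀ᶠ k : ℕ in Filter.atTop, r ^ k < x i0 / X := by
    have := tendsto_pow_atTop_nhds_zero_of_lt_one hr0 hr1
    exact this.eventually_lt_const (by positivity)
  obtain ⟨k, hk1, hk2⟩ := (hev1.and hev2).exists
  have : x i0 < x i0 := by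
    calc x i0 ≤ ‖Q ^ k‖ * X := hbound k
      _ < r ^ k * X := mul_lt_mul_of_pos_right hk1 hXpos
      _ < (x i0 / X) * X := mul_lt_mul_of_pos_right hk2 hXpos
      _ = x i0 := by field_simp
  linarith

theorem exists_resolvent_vec [Nonempty (Fin n)] {Q : Matrix (Fin n) (Fin n) ℝ} {s : ℝ}
    (hQ : ∀ i j, 0 ≤ Q i j) (hs : specRad Q < s) :
    ∃ w : Fin n → ℝ, (∀ i, 0 < w i) ∧ ∀ i, s * w i - Q.mulVec w i = 1 := by
  have hs0 : 0 < s := (specRad_nonneg Q).trans_lt hs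
  obtain ⟨r, hr0, hrs, M, hM, hbd⟩ :
      ∃ r : ℝ, 0 < r ∧ r < s ∧ ∃ M : ℝ, 0 < M ∧ ∀ k, ‖Q ^ k‖ ≤ M * r ^ k := by
    refine ⟨(specRad Q + s)/2, by linarith [specRad_nonneg Q], by linarith [specRad_nonneg Q],
      exists_norm_pow_le Q (by linarith [specRad_nonneg Q])⟩
  have hgnn : ∀ k i, 0 ≤ ((Q ^ k).mulVec (fun _ => (1:ℝ))) i := fun k i =>
    mulVec_nonneg (pow_entry_nonneg hQ k) (fun _ => zero_le_one) i
  have hgbd : ∀ k i, ((Q ^ k).mulVec (fun _ => (1:ℝ))) i ≤ M * r ^ k := by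
    intro k i
    have hgdef : ((Q ^ k).mulVec (fun _ => (1:ℝ))) i = ∑ j, (Q ^ k) i j := by
      simp [Matrix.mulVec, dotProduct]
    rw [hgdef]
    refine le_trans (le_trans (le_of_eq ?_) (rowsum_le_norm (Q ^ k) i)) (hbd k)
    exact Finset.sum_congr rfl fun j _ => (abs_of_nonneg (pow_entry_nonneg hQ k i j)).symm
  have hunn : ∀ k i, 0 ≤ s⁻¹ ^ k * ((Q ^ k).mulVec (fun _ => (1:ℝ))) i := fun k i =>
    mul_nonneg (by positivity) (hgnn k i)
  have hgeo : Summable fun k : ℕ => M * (r / s) ^ k :=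
    (summable_geometric_of_lt_one (by positivity) (by rwa [div_lt_one hs0])).mul_left M
  have hSu : ∀ i, Summable fun k => s⁻¹ ^ k * ((Q ^ k).mulVec (fun _ => (1:ℝ))) i := by
    intro i
    refine Summable.of_nonneg_of_le (fun k => hunn k i) (fun k => ?_) hgeo
    calc s⁻¹ ^ k * ((Q ^ k).mulVec (fun _ => (1:ℝ))) i
        ≤ s⁻¹ ^ k * (M * r ^ k) := mul_le_mul_of_nonneg_left (hgbd k i) (by positivity)
      _ = M * (r / s) ^ k := by
          rw [div_pow, div_eq_mul_inv, ← inv_pow]; ring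
  set w : Fin n → ℝ := fun i => s⁻¹ * ∑' k, s⁻¹ ^ k * ((Q ^ k).mulVec (fun _ => (1:ℝ))) i
    with hw
  have hQg : ∀ k i, Q.mulVec ((Q ^ k).mulVec (fun _ => (1:ℝ))) i
      = ((Q ^ (k+1)).mulVec (fun _ => (1:ℝ))) i := by
    intro k i
    rw [Matrix.mulVec_mulVec, ← pow_succ']
  have hQw : ∀ i, Q.mulVec w i
      = ∑' k, s⁻¹ ^ (k+1) * ((Q ^ (k+1)).mulVec (fun _ => (1:ℝ))) i := by
    intro i
    have h1 : Q.mulVec w i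
        = ∑ j, Q i j * (s⁻¹ * ∑' k, s⁻¹ ^ k * ((Q ^ k).mulVec (fun _ => (1:ℝ))) j) := by
      simp [Matrix.mulVec, dotProduct, hw]
    rw [h1]
    have h2 : ∀ j, Q i j * (s⁻¹ * ∑' k, s⁻¹ ^ k * ((Q ^ k).mulVec (fun _ => (1:ℝ))) j)
        = ∑' k, s⁻¹ ^ (k+1) * (Q i j * ((Q ^ k).mulVec (fun _ => (1:ℝ))) j) := by
      intro j
      rw [← mul_assoc, ← tsum_mul_left]
      exact tsum_congr fun k => by ring
    simp_rw [h2]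
    rw [← Summable.tsum_finsetSum (fun j (_ : j ∈ Finset.univ) => ((hSu j).mul_left (Q i j * s⁻¹)).congr
      (fun k => by ring))]
    refine tsum_congr fun k => ?_
    rw [← hQg k i]
    have h3 : Q.mulVec ((Q ^ k).mulVec (fun _ => (1:ℝ))) i
        = ∑ j, Q i j * ((Q ^ k).mulVec (fun _ => (1:ℝ))) j := by
      simp [Matrix.mulVec, dotProduct]
    rw [h3, Finset.mul_sum]
  have hkey : ∀ i, s * w i - Q.mulVec w i = 1 := by
    intro i
    have h6 : s * w i = ∑' k, s⁻¹ ^ k * ((Q ^ k).mulVec (fun _ => (1:ℝ))) i := by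
      rw [hw, ← mul_assoc, mul_inv_cancel₀ hs0.ne', one_mul]
    have h7 := Summable.tsum_eq_zero_add (hSu i)
    have h8 : s⁻¹ ^ 0 * ((Q ^ 0).mulVec (fun _ => (1:ℝ))) i = 1 := by
      simp [Matrix.one_mulVec]
    rw [h6, hQw i, h7, h8]; ring
  refine ⟨w, fun i => ?_, hkey⟩
  have h9 : 0 ≤ Q.mulVec w i := by
    rw [hQw i]; exact tsum_nonneg fun k => hunn (k+1) i
  have h10 := hkey i
  nlinarith

/-- Weak Perron–Frobenius. -/
theorem exists_perron {Q : Matrix (Fin n) (Fin n) ℝ}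
    (hQ : ∀ i j, 0 ≤ Q i j) (hpos : 0 < specRad Q) :
    ∃ v : Fin n → ℝ, (∀ i, 0 ≤ v i) ∧ (∃ i, 0 < v i) ∧
      ∀ i, Q.mulVec v i = specRad Q * v i := by
  have hn : 0 < n := by
    by_contra h
    rw [specRad_subsingleton (by omega) Q] at hpos
    exact lt_irrefl _ hpos
  haveI : Nonempty (Fin n) := ⟨⟨0, hn⟩⟩
  have hrρ : ∀ m : ℕ, specRad Q < specRad Q * (1 + 1/(m+1)) := by
    intro m
    have h1 : (0:ℝ) < 1/(m+1) := by positivity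
    nlinarith
  have hres : ∀ m : ℕ, ∃ w : Fin n → ℝ, (∀ i, 0 < w i) ∧
      ∀ i, (specRad Q * (1 + 1/(m+1))) * w i - Q.mulVec w i = 1 := fun m =>
    exists_resolvent_vec hQ (hrρ m)
  choose W hWpos hWeq using hres
  set X : ℕ → ℝ := fun m => Finset.univ.sup' Finset.univ_nonempty (W m) with hXdef
  have hXpos : ∀ m, 0 < X m := fun m =>
    lt_of_lt_of_le (hWpos m (Classical.arbitrary _))
      (Finset.le_sup' _ (Finset.mem_univ _))
  have hXge : ∀ m i, W m i ≤ X m := fun m i => Finset.le_sup' _ (Finset.mem_univ i)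
  have hXlb : ∀ m : ℕ, specRad Q ≤ specRad Q * (1 + 1/(m+1)) - 1 / X m := by
    intro m
    refine specRad_le_of_mulVec_le hQ (hWpos m) fun i => ?_
    have h1 := hWeq m i
    have h2 : 1 / X m * W m i ≤ 1 := by
      rw [div_mul_eq_mul_div, one_mul, div_le_one (hXpos m)]
      exact hXge m i
    nlinarith [hWpos m i]
  have hXinv : ∀ m : ℕ, (X m)⁻¹ ≤ specRad Q / (m+1) := by
    intro m
    have h1 := hXlb m
    have h2 : 1 / X m ≤ specRad Q * (1/(m+1)) := by nlinarith
    rw [one_div] at h2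
    calc (X m)⁻¹ ≤ specRad Q * (1/(m+1)) := h2
      _ = specRad Q / (m+1) := by ring
  set v : ℕ → Fin n → ℝ := fun m => (X m)⁻¹ • W m with hvdef
  have hv01 : ∀ m, v m ∈ Set.pi Set.univ fun _ : Fin n => Set.Icc (0:ℝ) 1 := by
    intro m i _
    refine ⟨mul_nonneg (inv_nonneg.mpr (hXpos m).le) (hWpos m i).le, ?_⟩
    show (X m)⁻¹ * W m i ≤ 1
    rw [inv_mul_eq_div, div_le_one (hXpos m)]
    exact hXge m i
  have hcomp : IsCompact (Set.pi Set.univ fun _ : Fin n => Set.Icc (0:ℝ) 1) :=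
    isCompact_univ_pi fun _ => isCompact_Icc
  obtain ⟨vl, hvl, φ, hφ, hconv⟩ := hcomp.tendsto_subseq hv01
  have hcoord : ∀ i, Filter.Tendsto (fun m => v (φ m) i) Filter.atTop (nhds (vl i)) :=
    fun i => (tendsto_pi_nhds.mp hconv) i
  -- limits of auxiliary sequences
  have hφge : ∀ m : ℕ, (m:ℝ) ≤ (φ m : ℝ) := fun m => by exact_mod_cast hφ.le_apply
  have hone : Filter.Tendsto (fun m : ℕ => 1/((φ m : ℝ)+1)) Filter.atTop (nhds 0) := by
    have h0 : Filter.Tendsto (fun m : ℕ => ((φ m : ℝ)+1)) Filter.atTop Filter.atTop := by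
      apply Filter.tendsto_atTop_add_const_right
      exact tendsto_natCast_atTop_atTop.comp hφ.tendsto_atTop
    simpa [Pi.inv_def] using h0.inv_tendsto_atTop
  have hXinv0 : Filter.Tendsto (fun m : ℕ => (X (φ m))⁻¹) Filter.atTop (nhds 0) := by
    have hg : Filter.Tendsto (fun m : ℕ => specRad Q * (1/((φ m : ℝ)+1))) Filter.atTop
        (nhds 0) := by
      simpa using hone.const_mul (specRad Q)
    refine squeeze_zero (fun m => inv_nonneg.mpr (hXpos (φ m)).le) (fun m => ?_) hg
    calc (X (φ m))⁻¹ ≤ specRad Q / ((φ m : ℝ)+1) := hXinv (φ m)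
      _ = specRad Q * (1/((φ m : ℝ)+1)) := by ring
  have hr : Filter.Tendsto (fun m : ℕ => specRad Q * (1 + 1/((φ m : ℝ)+1)))
      Filter.atTop (nhds (specRad Q)) := by
    have := (hone.const_add 1).const_mul (specRad Q)
    simpa using this
  refine ⟨vl, fun i => (hvl i (Set.mem_univ i)).1, ?_, ?_⟩
  · -- some entry positive, via sum ≥ 1
    have hsum1 : ∀ m, 1 ≤ ∑ i, v m i := by
      intro m
      obtain ⟨i0, _, hi0⟩ := Finset.exists_mem_eq_sup' Finset.univ_nonempty (W m)
      have hXm : X m = W m i0 := hi0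
      have hv1 : v m i0 = 1 := by
        show (X m)⁻¹ * W m i0 = 1
        rw [hXm]
        exact inv_mul_cancel₀ (by rw [← hXm]; exact (hXpos m).ne')
      calc (1:ℝ) = v m i0 := hv1.symm
        _ ≤ ∑ i, v m i := Finset.single_le_sum
            (fun i _ => (hv01 m i (Set.mem_univ i)).1) (Finset.mem_univ i0)
    have hsuml : Filter.Tendsto (fun m => ∑ i, v (φ m) i) Filter.atTop (nhds (∑ i, vl i)) :=
      tendsto_finset_sum _ fun i _ => hcoord i
    have h1 : 1 ≤ ∑ i, vl i := le_of_tendsto_of_tendsto' tendsto_const_nhds hsuml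
      (fun m => hsum1 (φ m))
    by_contra hcon
    push_neg at hcon
    have : ∑ i, vl i ≤ 0 := Finset.sum_nonpos fun i _ => hcon i
    linarith
  · intro i
    have hL : Filter.Tendsto (fun m => Q.mulVec (v (φ m)) i) Filter.atTop
        (nhds (Q.mulVec vl i)) := by
      have h1 : ∀ x : Fin n → ℝ, Q.mulVec x i = ∑ j, Q i j * x j := fun x => by
        simp [Matrix.mulVec, dotProduct]
      simp_rw [h1]
      exact tendsto_finset_sum _ fun j _ => (hcoord j).const_mul (Q i j)
    have hR : ∀ m, Q.mulVec (v (φ m)) i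
        = specRad Q * (1 + 1/((φ m : ℝ)+1)) * v (φ m) i - (X (φ m))⁻¹ := by
      intro m
      have h1 := hWeq (φ m) i
      have h2 : Q.mulVec (v (φ m)) i = (X (φ m))⁻¹ * Q.mulVec (W (φ m)) i := by
        rw [hvdef]
        show Q.mulVec ((X (φ m))⁻¹ • W (φ m)) i = _
        rw [Matrix.mulVec_smul]
        rfl
      rw [h2]
      show (X (φ m))⁻¹ * Q.mulVec (W (φ m)) i
          = specRad Q * (1 + 1/((φ m : ℝ)+1)) * ((X (φ m))⁻¹ * W (φ m) i) - (X (φ m))⁻¹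
      have h3 : Q.mulVec (W (φ m)) i
          = specRad Q * (1 + 1/((φ m : ℝ)+1)) * W (φ m) i - 1 := by linarith
      rw [h3]
      ring
    have hL2 : Filter.Tendsto (fun m => Q.mulVec (v (φ m)) i) Filter.atTop
        (nhds (specRad Q * vl i)) := by
      simp_rw [hR]
      have := (hr.mul (hcoord i)).sub hXinv0
      simpa using this
    exact tendsto_nhds_unique hL hL2

theorem specRad_smul_one_add_le [Nonempty (Fin n)] (P : Matrix (Fin n) (Fin n) ℝ) {K : ℝ}
    (hK : 0 ≤ K) : specRad (K • (1 : Matrix (Fin n) (Fin n) ℝ) + P) ≤ K + specRad P := by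
  refine le_of_forall_pos_le_add fun ε hε => ?_
  obtain ⟨M, hM, hbd⟩ := exists_norm_pow_le P (lt_add_of_pos_right _ hε)
  have hcomm : Commute (K • (1 : Matrix (Fin n) (Fin n) ℝ)) P := by
    unfold Commute SemiconjBy
    rw [smul_mul_assoc, one_mul, mul_smul_comm, mul_one]
  have hr : (0:ℝ) ≤ specRad P + ε := by have := specRad_nonneg P; linarith
  refine specRad_le_of_pow_bound (M := M) (by linarith) fun k hk => ?_
  rw [hcomm.add_pow]
  have hterm : ∀ m, ‖(K • (1 : Matrix (Fin n) (Fin n) ℝ)) ^ m * P ^ (k - m)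
      * ((Nat.choose k m : ℕ) : Matrix (Fin n) (Fin n) ℝ)‖
      ≤ (Nat.choose k m : ℝ) * (K ^ m * (M * (specRad P + ε) ^ (k - m))) := by
    intro m
    have hcast : ∀ B : Matrix (Fin n) (Fin n) ℝ,
        B * ((Nat.choose k m : ℕ) : Matrix (Fin n) (Fin n) ℝ)
        = ((Nat.choose k m : ℕ) : ℝ) • B := by
      intro B
      rw [← nsmul_eq_mul', ← Nat.cast_smul_eq_nsmul ℝ]
    rw [hcast, norm_smul, smul_pow, one_pow]
    rw [smul_mul_assoc, norm_smul]
    simp only [Real.norm_eq_abs, abs_of_nonneg (by positivity : (0:ℝ) ≤ (Nat.choose k m : ℝ)),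
      abs_of_nonneg (by positivity : (0:ℝ) ≤ K ^ m)]
    have h1 : ‖(1 : Matrix (Fin n) (Fin n) ℝ) * P ^ (k - m)‖ ≤ M * (specRad P + ε) ^ (k - m) := by
      rw [one_mul]; exact hbd (k - m)
    have h2 : (0:ℝ) ≤ K ^ m := by positivity
    have h3 : (0:ℝ) ≤ (Nat.choose k m : ℝ) := by positivity
    exact mul_le_mul_of_nonneg_left (mul_le_mul_of_nonneg_left h1 h2) h3
  refine le_trans (norm_sum_le _ _) ?_
  refine le_trans (Finset.sum_le_sum fun m (_ : m ∈ Finset.range (k+1)) => hterm m)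
    (le_of_eq ?_)
  have hap : (K + (specRad P + ε)) ^ k
      = ∑ m ∈ Finset.range (k+1), K ^ m * (specRad P + ε) ^ (k - m) * (Nat.choose k m : ℝ) :=
    add_pow K (specRad P + ε) k
  rw [show K + specRad P + ε = K + (specRad P + ε) by ring, hap, Finset.mul_sum]
  exact Finset.sum_congr rfl fun m _ => by ring

/-- Calibration: find `t` with `specRad (N + t • Δ) = s` exactly. -/
theorem exists_calib {N Δ : Matrix (Fin n) (Fin n) ℝ} {s : ℝ}
    (hN : ∀ i j, 0 ≤ N i j) (hΔ : ∀ i j, 0 ≤ Δ i j)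
    (hs : specRad N < s) (hbig : s ≤ specRad (N + Δ)) :
    ∃ t : ℝ, 0 < t ∧ t ≤ 1 ∧ specRad (N + t • Δ) = s := by
  have hn : 0 < n := by
    rcases Nat.eq_zero_or_pos n with h | h
    · exfalso
      rw [specRad_subsingleton h] at hbig
      have := specRad_nonneg N
      linarith
    · exact h
  haveI : Nonempty (Fin n) := ⟨⟨0, hn⟩⟩
  have hs0 : 0 < s := (specRad_nonneg N).trans_lt hs
  set T : Set ℝ := {t : ℝ | 0 ≤ t ∧ t ≤ 1 ∧ specRad (N + t • Δ) < s} with hT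
  -- entrywise nonneg of N + t•Δ for t ≥ 0
  have hNt : ∀ t : ℝ, 0 ≤ t → ∀ i j, 0 ≤ (N + t • Δ) i j := by
    intro t ht i j
    have : (N + t • Δ) i j = N i j + t * Δ i j := rfl
    rw [this]
    have := hΔ i j
    nlinarith [hN i j]
  -- step 1 : a positive element of T
  obtain ⟨k, hknorm, hk1⟩ : ∃ k : ℕ, ‖N ^ k‖ < s ^ k ∧ 1 ≤ k :=
    ((eventually_norm_pow_lt N hs).and (Filter.eventually_ge_atTop 1)).exists
  have hcont : Continuous fun t : ℝ => ‖(N + t • Δ) ^ k‖ :=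
    ((continuous_const.add (continuous_id.smul continuous_const)).pow k).norm
  have hat0 : ∀ᶠ t : ℝ in nhds 0, ‖(N + t • Δ) ^ k‖ < s ^ k := by
    have h0 : ‖(N + (0:ℝ) • Δ) ^ k‖ < s ^ k := by
      rw [zero_smul, add_zero]; exact hknorm
    exact (hcont.tendsto 0).eventually_lt_const h0
  obtain ⟨δ, hδ0, hδ⟩ := Metric.eventually_nhds_iff.mp hat0
  set t0 : ℝ := min (δ/2) 1 with ht0def
  have ht0pos : 0 < t0 := lt_min (by linarith) one_pos
  have ht0T : t0 ∈ T := by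
    refine ⟨ht0pos.le, min_le_right _ _, ?_⟩
    have hd : dist t0 0 < δ := by
      rw [Real.dist_eq, sub_zero, abs_of_pos ht0pos]
      calc t0 ≤ δ/2 := min_le_left _ _
        _ < δ := by linarith
    have hnorm := hδ hd
    obtain ⟨k', rfl⟩ : ∃ k', k = k' + 1 := ⟨k - 1, by omega⟩
    have hp := specRad_pow_le (N + t0 • Δ) k'
    exact lt_of_pow_lt_pow_left₀ (k'+1) hs0.le (lt_of_le_of_lt hp hnorm)
  have hTne : T.Nonempty := ⟨t0, ht0T⟩
  have hTbdd : BddAbove T := ⟨1, fun t ht => ht.2.1⟩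
  set t1 := sSup T with ht1def
  have ht1ge : t0 ≤ t1 := le_csSup hTbdd ht0T
  have ht1pos : 0 < t1 := lt_of_lt_of_le ht0pos ht1ge
  have ht1le : t1 ≤ 1 := csSup_le hTne fun t ht => ht.2.1
  have hentry : ∀ (t : ℝ) i j, (N + t • Δ) i j = N i j + t * Δ i j := fun t i j => rfl
  have hcompare : ∀ a b : ℝ, 0 < a → a ≤ b →
      specRad (N + b • Δ) ≤ (b / a) * specRad (N + a • Δ) := by
    intro a b ha hab
    have hba : 1 ≤ b / a := (one_le_div ha).mpr hab
    have hle : ∀ i j, (N + b • Δ) i j ≤ ((b/a) • (N + a • Δ)) i j := by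
      intro i j
      have h1 : ((b/a) • (N + a • Δ)) i j = (b/a) * (N i j + a * Δ i j) := rfl
      rw [h1, hentry]
      have h2 : (b/a) * (a * Δ i j) = b * Δ i j := by field_simp
      have h3 := hN i j
      have h4 := hΔ i j
      nlinarith
    calc specRad (N + b • Δ) ≤ specRad ((b/a) • (N + a • Δ)) :=
          specRad_mono (hNt b (by linarith)) hle
      _ ≤ (b / a) * specRad (N + a • Δ) := specRad_smul_le (by positivity)
  refine ⟨t1, ht1pos, ht1le, le_antisymm ?_ ?_⟩
  · -- upper bound: specRad (N + t1 • Δ) ≤ s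
    by_contra hcon
    push_neg at hcon
    have hρ1pos : 0 < specRad (N + t1 • Δ) := hs0.trans hcon
    have hlt : t1 * s / specRad (N + t1 • Δ) < t1 := by
      rw [div_lt_iff₀ hρ1pos]; nlinarith
    obtain ⟨t, htT, htgt⟩ := exists_lt_of_lt_csSup hTne hlt
    have htpos : 0 < t := lt_of_le_of_lt (by positivity) htgt
    have h2 := hcompare t t1 htpos (le_csSup hTbdd htT)
    have h3 : specRad (N + t • Δ) < s := htT.2.2
    have h5 : t1 * s < t * specRad (N + t1 • Δ) := by
      rw [div_lt_iff₀ hρ1pos] at htgt; linarith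
    have h2' : specRad (N + t1 • Δ) * t ≤ t1 * specRad (N + t • Δ) := by
      have h2a := mul_le_mul_of_nonneg_right h2 htpos.le
      have heq : t1 / t * specRad (N + t • Δ) * t = t1 * specRad (N + t • Δ) := by
        calc t1 / t * specRad (N + t • Δ) * t = t1 * specRad (N + t • Δ) * (t / t) := by ring
          _ = t1 * specRad (N + t • Δ) := by rw [div_self htpos.ne', mul_one]
      calc specRad (N + t1 • Δ) * t ≤ t1 / t * specRad (N + t • Δ) * t := h2a
        _ = t1 * specRad (N + t • Δ) := heq
    nlinarith [mul_lt_mul_of_pos_left h3 ht1pos]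
  · -- lower bound: s ≤ specRad (N + t1 • Δ)
    rcases eq_or_lt_of_le ht1le with h1 | h1
    · rw [h1, one_smul]; exact hbig
    by_contra hcon
    push_neg at hcon
    have hρ1nn : 0 ≤ specRad (N + t1 • Δ) := specRad_nonneg _
    have hnotT : ∀ t' : ℝ, t1 < t' → t' ≤ 1 → s ≤ specRad (N + t' • Δ) := by
      intro t' hgt hle1
      by_contra hc2
      push_neg at hc2
      have ht'T : t' ∈ T := ⟨by linarith, hle1, hc2⟩
      exact absurd (le_csSup hTbdd ht'T) (not_le.mpr hgt)
    rcases eq_or_lt_of_le hρ1nn with hz | hz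
    · -- specRad (N + t1 • Δ) = 0
      have hgt : t1 < (t1+1)/2 := by linarith
      have hle1 : (t1+1)/2 ≤ 1 := by linarith
      have h6 := hcompare t1 ((t1+1)/2) ht1pos (by linarith)
      have h7 := hnotT ((t1+1)/2) hgt hle1
      rw [← hz, mul_zero] at h6
      linarith
    · set ρ1 := specRad (N + t1 • Δ) with hρ1def
      set t' := min ((t1+1)/2) (t1*(s+ρ1)/(2*ρ1)) with ht'def
      have hgt : t1 < t' := by
        refine lt_min (by linarith) ?_
        rw [lt_div_iff₀ (by positivity)]
        nlinarith
      have hle1 : t' ≤ 1 := le_trans (min_le_left _ _) (by linarith)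
      have h6 := hcompare t1 t' ht1pos hgt.le
      have h7 := hnotT t' hgt hle1
      have h8 : t' * (2*ρ1) ≤ t1*(s+ρ1) := by
        have := min_le_right ((t1+1)/2) (t1*(s+ρ1)/(2*ρ1))
        rw [le_div_iff₀ (by positivity)] at this
        linarith
      have h9 : t1 * specRad (N + t' • Δ) ≤ t' * ρ1 := by
        have h9a := mul_le_mul_of_nonneg_right h6 ht1pos.le
        have heq : t' / t1 * specRad (N + t1 • Δ) * t1 = t' * ρ1 := by
          calc t' / t1 * specRad (N + t1 • Δ) * t1 = t' * ρ1 * (t1 / t1) := by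
                rw [← hρ1def]; ring
            _ = t' * ρ1 := by rw [div_self ht1pos.ne', mul_one]
        calc t1 * specRad (N + t' • Δ) = specRad (N + t' • Δ) * t1 := by ring
          _ ≤ t' / t1 * specRad (N + t1 • Δ) * t1 := h9a
          _ = t' * ρ1 := heq
      nlinarith [mul_le_mul_of_nonneg_left h7 ht1pos.le]

end PF


section Bridge
variable {n : ℕ}

/-- An H-matrix is an R0-matrix. -/
theorem hmatrix_isR0 {A : Matrix (Fin n) (Fin n) ℝ} (h : IsHMatrix A) :
    IsR0Matrix A := by
  obtain ⟨s, NN, hNN, heq, hsp⟩ := h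
  intro I hI hex
  obtain ⟨x, hx0, _hxc, hxpos⟩ := hex
  have hs0 : 0 < s := lt_of_le_of_lt (PF.specRad_nonneg NN) hsp
  have hdiag : ∀ i, |A i i| = s - NN i i := by
    intro i
    have h1 := congrFun (congrFun heq i) i
    simp only [compMatrix, eq_self_iff_true, if_true, Matrix.sub_apply, Matrix.smul_apply,
      Matrix.one_apply_eq, smul_eq_mul, mul_one] at h1
    linarith [h1.le, h1.ge]
  have hoff : ∀ i j, i ≠ j → NN i j = |A i j| := by
    intro i j hij
    have h1 := congrFun (congrFun heq i) j
    simp only [compMatrix, if_neg hij, Matrix.sub_apply, Matrix.smul_apply,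
      Matrix.one_apply_ne hij, smul_eq_mul, mul_zero] at h1
    linarith [h1.le, h1.ge]
  set y : Fin n → ℝ := fun j => if h : j ∈ I then x ⟨j, h⟩ else 0 with hy
  have hymem : ∀ (j) (hj : j ∈ I), y j = x ⟨j, hj⟩ := by
    intro j hj; rw [hy]; exact dif_pos hj
  have hyout : ∀ j, j ∉ I → y j = 0 := by
    intro j hj; rw [hy]; exact dif_neg hj
  have hynn : ∀ j, 0 ≤ y j := by
    intro j
    by_cases hj : j ∈ I
    · rw [hymem j hj]; exact (hxpos _).le
    · rw [hyout j hj]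
  obtain ⟨i0, hi0⟩ := hI
  have hy0 : 0 < y i0 := by rw [hymem i0 hi0]; exact hxpos _
  have hkey : ∀ i, s * y i ≤ NN.mulVec y i := by
    intro i
    have hmv : NN.mulVec y i = ∑ j, NN i j * y j := by
      simp [Matrix.mulVec, dotProduct]
    by_cases hiI : i ∈ I
    · have hrow : ∑ j ∈ I, A i j * y j = 0 := by
        have h0 := hx0 ⟨i, hiI⟩
        have h1 : (A.submatrix ((↑) : ↥I → Fin n) ((↑) : ↥I → Fin n)).mulVec x ⟨i, hiI⟩
            = ∑ j : ↥I, A i ↑j * x j := by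
          simp [Matrix.mulVec, dotProduct, Matrix.submatrix_apply]
        have h2 : ∀ j : ↥I, A i ↑j * x j = A i ↑j * y ↑j := by
          intro j; rw [hymem ↑j j.2]
        have h3 : ∑ j : ↥I, A i ↑j * y ↑j = ∑ j ∈ I, A i j * y j :=
          Finset.sum_coe_sort I (fun j => A i j * y j)
        rw [h1] at h0
        rw [← h3, ← Finset.sum_congr rfl (fun j _ => h2 j)]
        exact h0
      have hsplit : A i i * y i + ∑ j ∈ I.erase i, A i j * y j = 0 := by
        rw [Finset.add_sum_erase I (fun j => A i j * y j) hiI]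
        exact hrow
      have habs : |A i i| * y i ≤ ∑ j ∈ Finset.univ.erase i, NN i j * y j := by
        calc |A i i| * y i = |A i i * y i| := by
              rw [abs_mul, abs_of_nonneg (hynn i)]
          _ = |∑ j ∈ I.erase i, A i j * y j| := by
              rw [show A i i * y i = -∑ j ∈ I.erase i, A i j * y j from by linarith, abs_neg]
          _ ≤ ∑ j ∈ I.erase i, |A i j * y j| := Finset.abs_sum_le_sum_abs _ _
          _ = ∑ j ∈ I.erase i, |A i j| * y j := Finset.sum_congr rfl fun j _ => by
              rw [abs_mul, abs_of_nonneg (hynn j)]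
          _ ≤ ∑ j ∈ Finset.univ.erase i, |A i j| * y j := by
              refine Finset.sum_le_sum_of_subset_of_nonneg
                (Finset.erase_subset_erase i (Finset.subset_univ I)) fun j _ _ =>
                mul_nonneg (abs_nonneg _) (hynn j)
          _ = ∑ j ∈ Finset.univ.erase i, NN i j * y j := Finset.sum_congr rfl fun j hj => by
              rw [hoff i j (Ne.symm (Finset.mem_erase.mp hj).1)]
      have hNNmv : NN.mulVec y i = NN i i * y i + ∑ j ∈ Finset.univ.erase i, NN i j * y j := by
        rw [hmv, Finset.add_sum_erase Finset.univ (fun j => NN i j * y j) (Finset.mem_univ i)]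
      have hd := hdiag i
      have : s * y i = |A i i| * y i + NN i i * y i := by rw [hd]; ring
      rw [this, hNNmv]
      linarith
    · rw [hyout i hiI, mul_zero]
      rw [hmv]
      exact Finset.sum_nonneg fun j _ => mul_nonneg (hNN i j) (hynn j)
  have h10 : ∀ i, y i ≤ (s⁻¹ • NN).mulVec y i := by
    intro i
    have h1 : (s⁻¹ • NN).mulVec y i = s⁻¹ * NN.mulVec y i := by
      rw [Matrix.smul_mulVec]; rfl
    rw [h1]
    have h2 := mul_le_mul_of_nonneg_left (hkey i) (inv_nonneg.mpr hs0.le)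
    rw [← mul_assoc, inv_mul_cancel₀ hs0.ne', one_mul] at h2
    exact h2
  have h11 := PF.one_le_specRad_of_le_mulVec
    (Q := s⁻¹ • NN) (fun i j => mul_nonneg (inv_nonneg.mpr hs0.le) (hNN i j))
    hynn ⟨i0, hy0⟩ h10
  have h12 : specRad (s⁻¹ • NN) ≤ s⁻¹ * specRad NN :=
    PF.specRad_smul_le (inv_nonneg.mpr hs0.le)
  have h13 : specRad NN / s < 1 := (div_lt_one hs0).mpr hsp
  rw [div_eq_inv_mul] at h13
  linarith

/-- If the spectral-radius condition fails, there is a non-R0 member of the interval. -/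
theorem exists_notR0 {N Δ : Matrix (Fin n) (Fin n) ℝ} {s : ℝ}
    (hN : ∀ i j, 0 ≤ N i j) (hΔ : ∀ i j, 0 ≤ Δ i j)
    (hs : specRad N < s) (hbig : s ≤ specRad (N + Δ)) :
    ∃ A : Matrix (Fin n) (Fin n) ℝ,
      memInterval (s • 1 - N - Δ) (s • 1 - N + Δ) A ∧ ¬ IsR0Matrix A := by
  obtain ⟨t, ht0, ht1, hteq⟩ := PF.exists_calib hN hΔ hs hbig
  have hs0 : 0 < s := lt_of_le_of_lt (PF.specRad_nonneg N) hs
  have hQnn : ∀ i j, 0 ≤ (N + t • Δ) i j := fun i j => by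
    have h1 : (N + t • Δ) i j = N i j + t * Δ i j := rfl
    nlinarith [hN i j, hΔ i j]
  obtain ⟨v, hvnn, ⟨iv, hiv⟩, hveig⟩ := PF.exists_perron hQnn (by rw [hteq]; exact hs0)
  set A : Matrix (Fin n) (Fin n) ℝ := s • 1 - (N + t • Δ) with hAdef
  have hAmv : ∀ i, A.mulVec v i = 0 := by
    intro i
    have h1 : A.mulVec v = (s • (1 : Matrix (Fin n) (Fin n) ℝ)).mulVec v
        - (N + t • Δ).mulVec v := by
      rw [hAdef, Matrix.sub_mulVec]
    have h2 : (s • (1 : Matrix (Fin n) (Fin n) ℝ)).mulVec v = s • v := by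
      rw [Matrix.smul_mulVec, Matrix.one_mulVec]
    have h3 := hveig i
    rw [hteq] at h3
    have h4 : A.mulVec v i = s * v i - (N + t • Δ).mulVec v i := by
      rw [h1]; rw [Pi.sub_apply, h2]; rfl
    rw [h4, h3]; ring
  refine ⟨A, ?_, ?_⟩
  · intro i j
    have e1 : A i j = s * (1 : Matrix (Fin n) (Fin n) ℝ) i j - (N i j + t * Δ i j) := rfl
    have e2 : (s • (1 : Matrix (Fin n) (Fin n) ℝ) - N - Δ) i j
        = s * (1 : Matrix (Fin n) (Fin n) ℝ) i j - N i j - Δ i j := rfl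
    have e3 : (s • (1 : Matrix (Fin n) (Fin n) ℝ) - N + Δ) i j
        = s * (1 : Matrix (Fin n) (Fin n) ℝ) i j - N i j + Δ i j := rfl
    rw [e1, e2, e3]
    constructor
    · nlinarith [hΔ i j]
    · nlinarith [hΔ i j]
  · intro hR0
    set I : Finset (Fin n) := Finset.univ.filter (fun i => 0 < v i) with hI
    have hvout : ∀ j, j ∉ I → v j = 0 := by
      intro j hj
      rw [hI] at hj
      simp only [Finset.mem_filter, Finset.mem_univ, true_and, not_lt] at hj
      exact le_antisymm hj (hvnn j)
    have hsub : ∀ i : Fin n, (∑ j : ↥I, A i ↑j * v ↑j) = A.mulVec v i := by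
      intro i
      rw [Finset.sum_coe_sort I (fun j => A i j * v j)]
      have h1 : A.mulVec v i = ∑ j, A i j * v j := by
        simp [Matrix.mulVec, dotProduct]
      rw [h1]
      refine Finset.sum_subset (Finset.subset_univ I) fun j _ hj => ?_
      rw [hvout j hj, mul_zero]
    have hIne : I.Nonempty := ⟨iv, by rw [hI]; simp [hiv]⟩
    refine hR0 I hIne ⟨fun i => v ↑i, ?_, ?_, ?_⟩
    · intro i
      have h1 : (A.submatrix ((↑) : ↥I → Fin n) ((↑) : ↥I → Fin n)).mulVec
          (fun j : ↥I => v ↑j) i = ∑ j : ↥I, A ↑i ↑j * v ↑j := by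
        simp [Matrix.mulVec, dotProduct, Matrix.submatrix_apply]
      rw [h1, hsub ↑i, hAmv ↑i]
    · intro j
      have h1 : (A.submatrix ((↑) : ↥(Iᶜ : Finset (Fin n)) → Fin n) ((↑) : ↥I → Fin n)).mulVec
          (fun j : ↥I => v ↑j) j = ∑ j' : ↥I, A ↑j ↑j' * v ↑j' := by
        simp [Matrix.mulVec, dotProduct, Matrix.submatrix_apply]
      rw [h1, hsub ↑j, hAmv ↑j]
    · intro i
      have h2 : (i : Fin n) ∈ Finset.univ.filter (fun i => 0 < v i) := i.2
      exact (Finset.mem_filter.mp h2).2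

/-- If the spectral-radius condition holds, every member of the interval is an H-matrix. -/
theorem interval_isH {N Δ : Matrix (Fin n) (Fin n) ℝ} {s : ℝ}
    (hN : ∀ i j, 0 ≤ N i j) (hΔ : ∀ i j, 0 ≤ Δ i j)
    (hs : specRad N < s) (hsmall : specRad (N + Δ) < s)
    {A : Matrix (Fin n) (Fin n) ℝ}
    (hA : memInterval (s • 1 - N - Δ) (s • 1 - N + Δ) A) : IsHMatrix A := by
  have hs0 : 0 < s := lt_of_le_of_lt (PF.specRad_nonneg N) hs
  rcases Nat.eq_zero_or_pos n with hn | hn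
  · refine ⟨1, 0, fun i j => le_rfl, ?_, by rw [PF.specRad_zero]; norm_num⟩
    ext i j
    exact absurd (i.2) (by omega)
  haveI : Nonempty (Fin n) := ⟨⟨0, hn⟩⟩
  have hentL : ∀ i j, s * (1 : Matrix (Fin n) (Fin n) ℝ) i j - N i j - Δ i j ≤ A i j := by
    intro i j; exact (hA i j).1
  have hentU : ∀ i j, A i j ≤ s * (1 : Matrix (Fin n) (Fin n) ℝ) i j - N i j + Δ i j := by
    intro i j; exact (hA i j).2
  set K := Finset.univ.sup' Finset.univ_nonempty (fun i => N i i + Δ i i) with hK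
  have hKge : ∀ i, N i i + Δ i i ≤ K := fun i =>
    Finset.le_sup' (f := fun i => N i i + Δ i i) (Finset.mem_univ i)
  have hK0 : 0 ≤ K := by
    obtain ⟨i⟩ := (inferInstance : Nonempty (Fin n))
    have := hKge i
    nlinarith [hN i i, hΔ i i]
  set NQ : Matrix (Fin n) (Fin n) ℝ := (s + K) • 1 - compMatrix A with hNQ
  have hNQdiag : ∀ i, NQ i i = s + K - |A i i| := by
    intro i
    rw [hNQ]
    simp [compMatrix, Matrix.sub_apply, Matrix.smul_apply, Matrix.one_apply_eq]
  have hNQoff : ∀ i j, i ≠ j → NQ i j = |A i j| := by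
    intro i j hij
    rw [hNQ]
    simp [compMatrix, hij, Matrix.sub_apply, Matrix.smul_apply, Matrix.one_apply_ne hij]
  have hdiagU : ∀ i, A i i ≤ s - N i i + Δ i i := by
    intro i
    have := hentU i i
    rwa [Matrix.one_apply_eq, mul_one] at this
  have hdiagL : ∀ i, s - N i i - Δ i i ≤ A i i := by
    intro i
    have := hentL i i
    rwa [Matrix.one_apply_eq, mul_one] at this
  have hoffB : ∀ i j, i ≠ j → |A i j| ≤ N i j + Δ i j := by
    intro i j hij
    have h1 := hentL i j
    have h2 := hentU i j
    rw [Matrix.one_apply_ne hij, mul_zero] at h1 h2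
    rw [abs_le]
    constructor <;> linarith [hN i j]
  have hNQnn : ∀ i j, 0 ≤ NQ i j := by
    intro i j
    by_cases hij : i = j
    · subst hij
      rw [hNQdiag i]
      have h1 := hdiagU i
      have h2 := hdiagL i
      have h3 := hKge i
      have h4 : |A i i| ≤ s + K := by
        rw [abs_le]
        constructor <;> nlinarith [hN i i, hΔ i i]
      linarith
    · rw [hNQoff i j hij]
      exact abs_nonneg _
  have hNQle : ∀ i j, NQ i j ≤ (K • 1 + (N + Δ)) i j := by
    intro i j
    have hrhs : (K • (1 : Matrix (Fin n) (Fin n) ℝ) + (N + Δ)) i j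
        = K * (1 : Matrix (Fin n) (Fin n) ℝ) i j + (N i j + Δ i j) := rfl
    by_cases hij : i = j
    · subst hij
      rw [hNQdiag i, hrhs, Matrix.one_apply_eq, mul_one]
      rcases le_or_gt 0 (A i i) with hc | hc
      · rw [abs_of_nonneg hc]
        have := hdiagL i
        linarith
      · rw [abs_of_neg hc]
        have := hdiagL i
        nlinarith
    · rw [hNQoff i j hij, hrhs, Matrix.one_apply_ne hij, mul_zero]
      have := hoffB i j hij
      linarith
  have hspec : specRad NQ < s + K := by
    calc specRad NQ ≤ specRad (K • 1 + (N + Δ)) := PF.specRad_mono hNQnn hNQle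
      _ ≤ K + specRad (N + Δ) := PF.specRad_smul_one_add_le (N + Δ) hK0
      _ < s + K := by linarith
  refine ⟨s + K, NQ, hNQnn, ?_, hspec⟩
  rw [hNQ]
  ext i j
  simp [Matrix.sub_apply]

end Bridge

theorem stmt_18 {n : ℕ} (Al Au : Matrix (Fin n) (Fin n) ℝ)
    (hle : ∀ i j, Al i j ≤ Au i j)
    (Ac : Matrix (Fin n) (Fin n) ℝ) (hAc : Ac = (1/2 : ℝ) • (Al + Au)) (Δ : Matrix (Fin n) (Fin n) ℝ) (hΔ : Δ = (1/2 : ℝ) • (Au - Al)) :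
    (IsMMatrix Ac →
      ((∀ A : Matrix (Fin n) (Fin n) ℝ, memInterval Al Au A → IsR0Matrix A) ↔ (∀ A : Matrix (Fin n) (Fin n) ℝ, memInterval Al Au A → IsHMatrix A))) ∧
    (Ac = (1 : Matrix (Fin n) (Fin n) ℝ) →
      ((∀ A : Matrix (Fin n) (Fin n) ℝ, memInterval Al Au A → IsR0Matrix A) ↔ specRad Δ < 1)) := by
  subst hAc hΔ
  have hΔnn : ∀ i j, 0 ≤ ((1/2 : ℝ) • (Au - Al)) i j := by
    intro i j
    have := hle i j
    have h1 : ((1/2 : ℝ) • (Au - Al)) i j = (1/2) * (Au i j - Al i j) := rfl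
    rw [h1]; linarith
  constructor
  · rintro ⟨s, N, hN, hAcEq, hsp⟩
    have hAl : Al = s • 1 - N - (1/2 : ℝ) • (Au - Al) := by
      have h1 : (1/2 : ℝ) • (Al + Au) = s • 1 - N := hAcEq
      ext i j
      have h2 := congrFun (congrFun h1 i) j
      have h3 : ((1/2 : ℝ) • (Al + Au)) i j = (1/2) * (Al i j + Au i j) := rfl
      have h4 : (s • (1 : Matrix (Fin n) (Fin n) ℝ) - N) i j
          = s * (1 : Matrix (Fin n) (Fin n) ℝ) i j - N i j := rfl
      rw [h3, h4] at h2
      show Al i j = s * (1 : Matrix (Fin n) (Fin n) ℝ) i j - N i j - (1/2) * (Au i j - Al i j)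
      linarith
    have hAu : Au = s • 1 - N + (1/2 : ℝ) • (Au - Al) := by
      have h1 : (1/2 : ℝ) • (Al + Au) = s • 1 - N := hAcEq
      ext i j
      have h2 := congrFun (congrFun h1 i) j
      have h3 : ((1/2 : ℝ) • (Al + Au)) i j = (1/2) * (Al i j + Au i j) := rfl
      have h4 : (s • (1 : Matrix (Fin n) (Fin n) ℝ) - N) i j
          = s * (1 : Matrix (Fin n) (Fin n) ℝ) i j - N i j := rfl
      rw [h3, h4] at h2
      show Au i j = s * (1 : Matrix (Fin n) (Fin n) ℝ) i j - N i j + (1/2) * (Au i j - Al i j)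
      linarith
    constructor
    · intro hR0 A hA
      by_cases hρ : specRad (N + (1/2 : ℝ) • (Au - Al)) < s
      · exact interval_isH hN hΔnn hsp hρ (by rw [← hAl, ← hAu]; exact hA)
      · exfalso
        push_neg at hρ
        obtain ⟨A', hA', hnR0⟩ := exists_notR0 hN hΔnn hsp hρ
        refine hnR0 (hR0 A' ?_)
        intro i j
        refine ⟨?_, ?_⟩
        · rw [congrFun (congrFun hAl i) j]; exact (hA' i j).1
        · rw [congrFun (congrFun hAu i) j]; exact (hA' i j).2
    · intro hH A hA
      exact hmatrix_isR0 (hH A hA)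
  · intro hAc1
    have h0N : specRad (0 : Matrix (Fin n) (Fin n) ℝ) < 1 := by
      rw [PF.specRad_zero]; norm_num
    have hAl : Al = (1:ℝ) • 1 - 0 - (1/2 : ℝ) • (Au - Al) := by
      ext i j
      have h2 := congrFun (congrFun hAc1 i) j
      have h3 : ((1/2 : ℝ) • (Al + Au)) i j = (1/2) * (Al i j + Au i j) := rfl
      rw [h3] at h2
      show Al i j = 1 * (1 : Matrix (Fin n) (Fin n) ℝ) i j - (0:Matrix (Fin n) (Fin n) ℝ) i j
        - (1/2) * (Au i j - Al i j)
      have h5 : (0 : Matrix (Fin n) (Fin n) ℝ) i j = 0 := rfl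
      rw [h5]
      linarith
    have hAu : Au = (1:ℝ) • 1 - 0 + (1/2 : ℝ) • (Au - Al) := by
      ext i j
      have h2 := congrFun (congrFun hAc1 i) j
      have h3 : ((1/2 : ℝ) • (Al + Au)) i j = (1/2) * (Al i j + Au i j) := rfl
      rw [h3] at h2
      show Au i j = 1 * (1 : Matrix (Fin n) (Fin n) ℝ) i j - (0:Matrix (Fin n) (Fin n) ℝ) i j
        + (1/2) * (Au i j - Al i j)
      have h5 : (0 : Matrix (Fin n) (Fin n) ℝ) i j = 0 := rfl
      rw [h5]
      linarith
    constructor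
    · intro hR0
      by_contra hcon
      push_neg at hcon
      have hbig : (1:ℝ) ≤ specRad ((0 : Matrix (Fin n) (Fin n) ℝ) + (1/2 : ℝ) • (Au - Al)) := by
        rwa [zero_add]
      obtain ⟨A', hA', hnR0⟩ := exists_notR0 (N := 0) (fun i j => le_rfl) hΔnn h0N hbig
      refine hnR0 (hR0 A' ?_)
      intro i j
      refine ⟨?_, ?_⟩
      · rw [congrFun (congrFun hAl i) j]; exact (hA' i j).1
      · rw [congrFun (congrFun hAu i) j]; exact (hA' i j).2
    · intro hρ A hA
      have hsmall : specRad ((0 : Matrix (Fin n) (Fin n) ℝ) + (1/2 : ℝ) • (Au - Al)) < 1 := by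
        rwa [zero_add]
      exact hmatrix_isR0
        (interval_isH (N := 0) (fun i j => le_rfl) hΔnn h0N hsmall
          (by rw [← hAl, ← hAu]; exact hA))
end
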